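/- arXiv:1103.5305 — 2 statements merged into one kernel-verified Lean document; each statement's English description precedes it below -/
import Mathlib

section
/- Let K ∈ ℝ and let θ : ℝ → ℝ be the constant function θ ≡ K. Then for every x ∈ ℝ and every integer n ≥ 1, the determinant of the n×n Hankel matrix with (i,j) entry 𝒮_{i+j−1}^θ(x)/(i+j−1)! equals 2^{n(n−1)}·K^{n(n−1)/2}·∏_{k=1}^{n} (n−k)!/(2n−k)!. (Note n(n−1) is even, so n(n−1)/2 is a nonnegative integer.) -/
noncomputable section

/-- `g_R(t) = -(R/π)·log(1 - (π/R)·t)`. -/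
def gR (R t : ℝ) : ℝ := -(R / Real.pi) * Real.log (1 - (Real.pi / R) * t)

/-- `f` is a (smooth) solution of `f'' + θ·f = 0`. -/
def IsSolution (θ f : ℝ → ℝ) : Prop :=
  ContDiff ℝ (⊤ : ℕ∞) f ∧ ∀ t, deriv (deriv f) t + θ t * f t = 0

/-- `f₁, f₂` is the fundamental pair of solutions of `f'' + θ·f = 0` at `x`:
`f₁(x) = f₂'(x) = 1`, `f₂(x) = f₁'(x) = 0`. -/
def IsFundPair (θ : ℝ → ℝ) (x : ℝ) (f₁ f₂ : ℝ → ℝ) : Prop :=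
  IsSolution θ f₁ ∧ IsSolution θ f₂ ∧
  f₁ x = 1 ∧ deriv f₁ x = 0 ∧ f₂ x = 0 ∧ deriv f₂ x = 1

/-- The `n`-th `g_R`-Schwarzian `𝒮_n^{θ,g_R}(x)`, computed from the fundamental pair
`f₁, f₂` at `x`: the `n`-th derivative at `t = 0` of `t ↦ h_x(x + g_R(t))`,
where `h_x = f₂/f₁`. -/
def SchR (R x : ℝ) (f₁ f₂ : ℝ → ℝ) (n : ℕ) : ℝ :=
  iteratedDeriv n (fun t => f₂ (x + gR R t) / f₁ (x + gR R t)) 0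

/-- The determinant `𝒟_n^{θ,g_R}(x)` of the `n×n` Hankel matrix with `(i,j)` entry
`𝒮_{i+j-1}^{θ,g_R}(x)/(i+j-1)!`. -/
def DetR (R x : ℝ) (f₁ f₂ : ℝ → ℝ) (n : ℕ) : ℝ :=
  (Matrix.of fun i j : Fin n =>
    SchR R x f₁ f₂ (i.1 + j.1 + 1) / (Nat.factorial (i.1 + j.1 + 1) : ℝ)).det

/-- Hypothesis (H_R): `f₁, f₂` are linearly independent solutions of `f'' + θ·f = 0`
(constant Wronskian `W = f₁f₂' - f₁'f₂ ≠ 0`) and `h = f₂/f₁` admits a meromorphic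
extension `H` to the strip `{|Im z| < R}` (holomorphic off the real zeros of `f₁`,
with poles at those zeros) which satisfies `W·Im H(z)·Im z > 0` for `0 < Im z < R`. -/
def HypR (θ : ℝ → ℝ) (R : ℝ) : Prop :=
  ∃ (f₁ f₂ : ℝ → ℝ) (H : ℂ → ℂ),
    IsSolution θ f₁ ∧ IsSolution θ f₂ ∧
    f₁ 0 * deriv f₂ 0 - deriv f₁ 0 * f₂ 0 ≠ 0 ∧
    (∀ t : ℝ, f₁ t ≠ 0 → H t = ((f₂ t / f₁ t : ℝ) : ℂ)) ∧
    DifferentiableOn ℂ H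
      {z : ℂ | |z.im| < R ∧ ∀ t : ℝ, f₁ t = 0 → z ≠ (t : ℂ)} ∧
    (∀ t : ℝ, f₁ t = 0 →
      Filter.Tendsto (fun z => ‖H z‖) (nhdsWithin (t : ℂ) {(t : ℂ)}ᶜ) Filter.atTop) ∧
    (∀ z : ℂ, 0 < z.im → z.im < R →
      0 < (f₁ 0 * deriv f₂ 0 - deriv f₁ 0 * f₂ 0) * (H z).im * z.im)

/-- `(i,j)` entry (1-based, clamped to ℕ) of the matrix `T(f,n)(t)`:
`f^{(j-i)}(t)/(j-i)!` if `i ≤ j`, and `0` otherwise. -/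
def Tentry (f : ℝ → ℝ) (t : ℝ) (i j : ℕ) : ℝ :=
  if i ≤ j then iteratedDeriv (j - i) f t / (Nat.factorial (j - i) : ℝ) else 0

end

noncomputable section
namespace Stmt15Aux
open Filter Topology Set PowerSeries


open Filter Topology Set

lemma itd_zero_fun (m : ℕ) (y : ℝ) : iteratedDeriv m (fun _ : ℝ => (0:ℝ)) y = 0 := by
  induction m generalizing y with
  | zero => simp
  | succ m ih =>
    rw [iteratedDeriv_succ' (n := m)]
    have : (deriv (fun _ : ℝ => (0:ℝ))) = (fun _ : ℝ => (0:ℝ)) := by funext t; simp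
    rw [this]; exact ih y

lemma itd_const (c : ℝ) (m : ℕ) (y : ℝ) (hm : m ≠ 0) :
    iteratedDeriv m (fun _ : ℝ => c) y = 0 := by
  obtain ⟨k, rfl⟩ := Nat.exists_eq_succ_of_ne_zero hm
  rw [iteratedDeriv_succ' (n := k)]
  have : (deriv (fun _ : ℝ => c)) = (fun _ : ℝ => (0:ℝ)) := by funext t; simp
  rw [this]; exact itd_zero_fun k y

variable {U : Set ℝ}

lemma locDiffAt (hU : IsOpen U) {f : ℝ → ℝ} (hf : ContDiffOn ℝ (⊤:ℕ∞) f U) {y : ℝ} (hy : y ∈ U) :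
    DifferentiableAt ℝ f y :=
  ((hf y hy).contDiffAt (hU.mem_nhds hy)).differentiableAt (by simp)

lemma locDerivContDiffOn (hU : IsOpen U) {f : ℝ → ℝ} (hf : ContDiffOn ℝ (⊤:ℕ∞) f U) :
    ContDiffOn ℝ (⊤:ℕ∞) (deriv f) U :=
  hf.deriv_of_isOpen hU (by simp)

lemma locAdd (hU : IsOpen U) {f g : ℝ → ℝ} (hf : ContDiffOn ℝ (⊤:ℕ∞) f U) (hg : ContDiffOn ℝ (⊤:ℕ∞) g U)
    (m : ℕ) : ∀ y ∈ U, iteratedDeriv m (fun t => f t + g t) y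
      = iteratedDeriv m f y + iteratedDeriv m g y := by
  induction m generalizing f g with
  | zero => intro y hy; simp
  | succ m ih =>
    intro y hy
    rw [iteratedDeriv_succ' (f := fun t => f t + g t),
      iteratedDeriv_succ' (f := f), iteratedDeriv_succ' (f := g)]
    have hev : deriv (fun t => f t + g t) =ᶠ[𝓝 y] fun t => deriv f t + deriv g t := by
      filter_upwards [hU.mem_nhds hy] with t ht
      exact deriv_add (locDiffAt hU hf ht) (locDiffAt hU hg ht)
    rw [hev.iteratedDeriv_eq m]
    exact ih (locDerivContDiffOn hU hf) (locDerivContDiffOn hU hg) y hy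

lemma locSMul (hU : IsOpen U) {f : ℝ → ℝ} (hf : ContDiffOn ℝ (⊤:ℕ∞) f U) (c : ℝ)
    (m : ℕ) : ∀ y ∈ U, iteratedDeriv m (fun t => c * f t) y = c * iteratedDeriv m f y := by
  induction m generalizing f with
  | zero => intro y hy; simp
  | succ m ih =>
    intro y hy
    rw [iteratedDeriv_succ' (f := fun t => c * f t), iteratedDeriv_succ' (f := f)]
    have hev : deriv (fun t => c * f t) =ᶠ[𝓝 y] fun t => c * deriv f t := by
      filter_upwards [hU.mem_nhds hy] with t ht
      exact deriv_const_mul c (locDiffAt hU hf ht)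
    rw [hev.iteratedDeriv_eq m]
    exact ih (locDerivContDiffOn hU hf) y hy

/-- Pascal convolution identity -/
lemma pascal_conv (a b : ℕ → ℝ) (m : ℕ) :
    (∑ i ∈ Finset.range (m+1), (m.choose i : ℝ) * (a (i+1) * b (m-i)))
      + (∑ i ∈ Finset.range (m+1), (m.choose i : ℝ) * (a i * b (m-i+1)))
    = ∑ i ∈ Finset.range (m+2), ((m+1).choose i : ℝ) * (a i * b (m+1-i)) := by
  rw [Finset.sum_range_succ' (fun i => ((m+1).choose i : ℝ) * (a i * b (m+1-i))) (m+1)]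
  have h1 : ∀ i ∈ Finset.range (m+1),
      (((m+1).choose (i+1) : ℝ)) * (a (i+1) * b (m+1-(i+1)))
      = (m.choose i : ℝ) * (a (i+1) * b (m-i)) + (m.choose (i+1) : ℝ) * (a (i+1) * b (m-i)) := by
    intro i hi
    rw [Nat.choose_succ_succ m i]
    simp only [Nat.succ_sub_succ]
    push_cast
    ring
  rw [Finset.sum_congr rfl h1, Finset.sum_add_distrib]
  have h2 : (∑ i ∈ Finset.range (m+1), (m.choose (i+1) : ℝ) * (a (i+1) * b (m-i)))
      + ((m+1).choose 0 : ℝ) * (a 0 * b (m+1-0))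
      = ∑ i ∈ Finset.range (m+1), (m.choose i : ℝ) * (a i * b (m-i+1)) := by
    have := Finset.sum_range_succ' (fun i => (m.choose i : ℝ) * (a i * b (m+1-i))) m
    -- RHS sum with index i : b (m-i+1) = b (m+1-i) for i ≤ m
    have hr : ∑ i ∈ Finset.range (m+1), (m.choose i : ℝ) * (a i * b (m-i+1))
        = ∑ i ∈ Finset.range (m+1), (m.choose i : ℝ) * (a i * b (m+1-i)) := by
      refine Finset.sum_congr rfl ?_
      intro i hi
      have : m - i + 1 = m + 1 - i := by
        have := Finset.mem_range.mp hi; omega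
      rw [this]
    have hl : ∑ i ∈ Finset.range (m+1), (m.choose (i+1) : ℝ) * (a (i+1) * b (m-i))
        = ∑ i ∈ Finset.range m, (m.choose (i+1) : ℝ) * (a (i+1) * b (m+1-(i+1))) := by
      rw [Finset.sum_range_succ]
      simp only [Nat.choose_succ_self, Nat.cast_zero, zero_mul, add_zero]
      refine Finset.sum_congr rfl ?_
      intro i hi
      have := Finset.mem_range.mp hi
      have : m - i = m + 1 - (i+1) := by omega
      rw [this]
    rw [hr, this, hl]
    simp
  linarith [h2]

lemma locMul (hU : IsOpen U) {f g : ℝ → ℝ} (hf : ContDiffOn ℝ (⊤:ℕ∞) f U) (hg : ContDiffOn ℝ (⊤:ℕ∞) g U)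
    (m : ℕ) : ∀ y ∈ U, iteratedDeriv m (fun t => f t * g t) y
      = ∑ i ∈ Finset.range (m+1),
          (m.choose i : ℝ) * (iteratedDeriv i f y * iteratedDeriv (m-i) g y) := by
  induction m generalizing f g with
  | zero => intro y hy; simp
  | succ m ih =>
    intro y hy
    rw [iteratedDeriv_succ' (f := fun t => f t * g t)]
    have hev : deriv (fun t => f t * g t) =ᶠ[𝓝 y]
        fun t => deriv f t * g t + f t * deriv g t := by
      filter_upwards [hU.mem_nhds hy] with t ht
      exact deriv_mul (locDiffAt hU hf ht) (locDiffAt hU hg ht)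
    rw [hev.iteratedDeriv_eq m]
    have hf' := locDerivContDiffOn hU hf
    have hg' := locDerivContDiffOn hU hg
    rw [locAdd hU (hf'.mul hg) (hf.mul hg') m y hy, ih hf' hg y hy, ih hf hg' y hy]
    have e1 : ∀ i, iteratedDeriv i (deriv f) y = iteratedDeriv (i+1) f y := by
      intro i; rw [← iteratedDeriv_succ']
    have e2 : ∀ i, iteratedDeriv (m - i) (deriv g) y = iteratedDeriv (m-i+1) g y := by
      intro i; rw [← iteratedDeriv_succ']
    simp only [e1, e2]
    exact pascal_conv (fun i => iteratedDeriv i f y) (fun i => iteratedDeriv i g y) m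


/-- a function with zero derivative everywhere is constant -/
lemma const_of_hasDerivAt_zero {f : ℝ → ℝ} (h : ∀ t, HasDerivAt f 0 t) (a b : ℝ) :
    f a = f b :=
  is_const_of_deriv_eq_zero (fun t => (h t).differentiableAt) (fun t => (h t).deriv) a b

theorem part1 (K x : ℝ) (f₁ f₂ : ℝ → ℝ) (hf : IsFundPair (fun _ => K) x f₁ f₂) :
    (iteratedDeriv 0 (fun t => f₂ t / f₁ t) x / (Nat.factorial 0 : ℝ)) = 0 ∧
    ∀ m : ℕ, ((m:ℝ)+1) * (iteratedDeriv (m+1) (fun t => f₂ t / f₁ t) x / (Nat.factorial (m+1) : ℝ))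
      = (if m = 0 then 1 else 0)
        + K * ∑ i ∈ Finset.range (m+1),
            (iteratedDeriv i (fun t => f₂ t / f₁ t) x / (Nat.factorial i : ℝ))
            * (iteratedDeriv (m-i) (fun t => f₂ t / f₁ t) x / (Nat.factorial (m-i) : ℝ)) := by
  obtain ⟨⟨hc1, hode1⟩, ⟨hc2, hode2⟩, h1x, h1x', h2x, h2x'⟩ := hf
  have hd1 : Differentiable ℝ f₁ := hc1.differentiable (by simp)
  have hd2 : Differentiable ℝ f₂ := hc2.differentiable (by simp)
  have hc1' : ContDiff ℝ (⊤:ℕ∞) (deriv f₁) := (contDiff_infty_iff_deriv.mp hc1).2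
  have hc2' : ContDiff ℝ (⊤:ℕ∞) (deriv f₂) := (contDiff_infty_iff_deriv.mp hc2).2
  have hd1' : Differentiable ℝ (deriv f₁) := hc1'.differentiable (by simp)
  have hd2' : Differentiable ℝ (deriv f₂) := hc2'.differentiable (by simp)
  -- basic HasDerivAt facts
  have H1 : ∀ t, HasDerivAt f₁ (deriv f₁ t) t := fun t => (hd1 t).hasDerivAt
  have H2 : ∀ t, HasDerivAt f₂ (deriv f₂ t) t := fun t => (hd2 t).hasDerivAt
  have H1' : ∀ t, HasDerivAt (deriv f₁) (-(K * f₁ t)) t := by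
    intro t
    have := (hd1' t).hasDerivAt
    have e : deriv (deriv f₁) t = -(K * f₁ t) := by have := hode1 t; linarith
    rwa [e] at this
  have H2' : ∀ t, HasDerivAt (deriv f₂) (-(K * f₂ t)) t := by
    intro t
    have := (hd2' t).hasDerivAt
    have e : deriv (deriv f₂) t = -(K * f₂ t) := by have := hode2 t; linarith
    rwa [e] at this
  -- Wronskian constant = 1
  have hW : ∀ t, f₁ t * deriv f₂ t - deriv f₁ t * f₂ t = 1 := by
    intro t
    have hconst := const_of_hasDerivAt_zero (f := fun t => f₁ t * deriv f₂ t - deriv f₁ t * f₂ t)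
      (fun t => by
        have := ((H1 t).mul (H2' t)).sub ((H1' t).mul (H2 t))
        exact this.congr_deriv (by ring)
        ) t x
    rw [hconst, h1x, h1x', h2x, h2x']; ring
  -- Q = deriv f₁ ^2 + K f₁^2 = K
  have hQ : ∀ t, deriv f₁ t ^ 2 + K * f₁ t ^ 2 = K := by
    intro t
    have hconst := const_of_hasDerivAt_zero (f := fun t => deriv f₁ t ^2 + K * f₁ t ^2)
      (fun t => by
        have := ((H1' t).pow 2).add (((H1 t).pow 2).const_mul K)
        exact this.congr_deriv (by simp; ring)
        ) t x
    rw [hconst, h1x, h1x']; ring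
  have hR : ∀ t, deriv f₂ t ^ 2 + K * f₂ t ^ 2 = 1 := by
    intro t
    have hconst := const_of_hasDerivAt_zero (f := fun t => deriv f₂ t ^2 + K * f₂ t ^2)
      (fun t => by
        have := ((H2' t).pow 2).add (((H2 t).pow 2).const_mul K)
        exact this.congr_deriv (by simp; ring)
        ) t x
    rw [hconst, h2x, h2x']; ring
  have hS : ∀ t, deriv f₁ t * deriv f₂ t + K * (f₁ t * f₂ t) = 0 := by
    intro t
    have hconst := const_of_hasDerivAt_zero (f := fun t => deriv f₁ t * deriv f₂ t + K * (f₁ t * f₂ t))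
      (fun t => by
        have := ((H1' t).mul (H2' t)).add (((H1 t).mul (H2 t)).const_mul K)
        exact this.congr_deriv (by ring)
        ) t x
    rw [hconst, h1x, h1x', h2x, h2x']; ring
  -- energy identity
  have hE : ∀ t, f₁ t ^ 2 + K * f₂ t ^ 2 = 1 := by
    intro t
    have h1 := hQ t; have h2 := hR t; have h3 := hS t; have h4 := hW t
    linear_combination (-(f₂ t)^2) * h1 + (-(f₁ t)^2) * h2 + 2*(f₁ t)*(f₂ t)*h3
      + (f₁ t * deriv f₂ t - deriv f₁ t * f₂ t + 1) * h4
  set U : Set ℝ := {t | f₁ t ≠ 0} with hUdef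
  have hU : IsOpen U := isOpen_compl_singleton.preimage hc1.continuous
  have hxU : x ∈ U := by simp [hUdef, h1x]
  set H : ℝ → ℝ := fun t => f₂ t / f₁ t with hHdef
  have hHc : ContDiffOn ℝ (⊤:ℕ∞) H U := by
    exact ContDiffOn.div (hc2.contDiffOn) (hc1.contDiffOn) (fun t ht => ht)
  have hHx : H x = 0 := by simp [hHdef, h2x]
  have hderH : ∀ t ∈ U, deriv H t = 1 + K * (H t * H t) := by
    intro t ht
    have hne : f₁ t ≠ 0 := ht
    have hdiv := (H2 t).div (H1 t) hne
    rw [show deriv H t = _ from hdiv.deriv]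
    have h4 := hW t
    have h5 := hE t
    simp only [hHdef]; field_simp
    nlinarith [h4, h5]
  -- the recursion
  refine ⟨by simp [hHdef, h2x], ?_⟩
  intro m
  have dstep : iteratedDeriv (m+1) H x
      = iteratedDeriv m (fun t => 1 + K * (H t * H t)) x := by
    rw [iteratedDeriv_succ']
    refine Filter.EventuallyEq.iteratedDeriv_eq m ?_
    filter_upwards [hU.mem_nhds hxU] with t ht
    exact hderH t ht
  rcases Nat.eq_zero_or_pos m with hm | hm
  · subst hm
    rw [dstep]
    simp [hHx]
  · have hm0 : m ≠ 0 := Nat.pos_iff_ne_zero.mp hm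
    have hadd := locAdd (U := U) hU (f := fun _ => (1:ℝ))
      (g := fun t => K * (H t * H t)) contDiffOn_const
      ((contDiffOn_const (c := K)).mul (hHc.mul hHc)) m x hxU
    have hsm := locSMul (U := U) hU (f := fun t => H t * H t) (hHc.mul hHc) K m x hxU
    have hmul := locMul (U := U) hU (f := H) (g := H) hHc hHc m x hxU
    have hval : iteratedDeriv m (fun t => 1 + K * (H t * H t)) x
        = K * ∑ i ∈ Finset.range (m+1),
            (m.choose i : ℝ) * (iteratedDeriv i H x * iteratedDeriv (m-i) H x) := by
      rw [hadd, itd_const 1 m x hm0, hsm, hmul]; ring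
    rw [if_neg hm0]
    have key : iteratedDeriv (m+1) H x
        = K * ∑ i ∈ Finset.range (m+1),
            (m.choose i : ℝ) * (iteratedDeriv i H x * iteratedDeriv (m-i) H x) := by
      rw [dstep, hval]
    have hterm : ∀ i ∈ Finset.range (m+1),
        (m.choose i : ℝ) * (iteratedDeriv i H x * iteratedDeriv (m-i) H x)
        = (m.factorial : ℝ) * ((iteratedDeriv i H x / (Nat.factorial i : ℝ))
            * (iteratedDeriv (m-i) H x / (Nat.factorial (m-i) : ℝ))) := by
      intro i hi
      have hi' : i ≤ m := by have := Finset.mem_range.mp hi; omega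
      have hfact := Nat.choose_mul_factorial_mul_factorial hi'
      have h1 : (Nat.factorial i : ℝ) ≠ 0 := Nat.cast_ne_zero.mpr (Nat.factorial_ne_zero i)
      have h2 : (Nat.factorial (m-i) : ℝ) ≠ 0 := Nat.cast_ne_zero.mpr (Nat.factorial_ne_zero (m-i))
      field_simp
      rw [show ((m.factorial : ℝ)) = ((m.choose i * i.factorial * (m-i).factorial : ℕ) : ℝ) by
        rw [hfact]]
      push_cast
      ring
    rw [Finset.sum_congr rfl hterm] at key
    rw [← Finset.mul_sum] at key
    have hfne : ((m+1).factorial : ℝ) ≠ 0 := Nat.cast_ne_zero.mpr (Nat.factorial_ne_zero _)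
    have hfs : ((m+1).factorial : ℝ) = ((m:ℝ)+1) * (m.factorial : ℝ) := by
      rw [Nat.factorial_succ]; push_cast; ring
    rw [key]
    have hmne : (m.factorial : ℝ) ≠ 0 := Nat.cast_ne_zero.mpr (Nat.factorial_ne_zero _)
    rw [hfs]; field_simp
    ring



open PowerSeries

/-- The ODE satisfied by the `j`-th Riccati-chain tail of `tan_K`, in cleared form:
`(2j+1)·X·φ' = (2j+1)²·X − (2j+1)(2j)·φ + K·X·φ²`, plus `φ(0) = 0`. -/
def Sol (K : ℝ) (j : ℕ) (φ : ℝ⟦X⟧) : Prop :=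
  constantCoeff (R := ℝ) φ = 0 ∧
  ((2*j+1 : ℕ) : ℝ⟦X⟧) * (X * (d⁄dX ℝ) φ) =
    ((2*j+1 : ℕ) : ℝ⟦X⟧)^2 * X - (((2*j+1)*(2*j) : ℕ) : ℝ⟦X⟧) * φ
      + C (R := ℝ) K * (X * φ^2)

lemma coeff_zero_X_mul (f : ℝ⟦X⟧) : coeff (R := ℝ) 0 (X * f) = 0 := by
  simp [PowerSeries.coeff_mul]

lemma natCast_ne_zero' {n : ℕ} (hn : n ≠ 0) : ((n : ℕ) : ℝ⟦X⟧) ≠ 0 := by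
  intro h
  have := congrArg (constantCoeff (R := ℝ)) h
  rw [map_natCast, map_zero] at this
  exact_mod_cast (Nat.cast_ne_zero (R := ℝ)).mpr hn this

lemma C_ne_zero' {a : ℝ} (ha : a ≠ 0) : (C (R := ℝ) a) ≠ 0 := by
  intro h
  have := congrArg (constantCoeff (R := ℝ)) h
  rw [PowerSeries.constantCoeff_C, map_zero] at this
  exact ha this

lemma coeff_one_sq {φ : ℝ⟦X⟧} (h0 : constantCoeff (R := ℝ) φ = 0) :
    coeff (R := ℝ) 1 (φ^2) = 0 := by
  rw [sq, PowerSeries.coeff_mul]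
  rw [Finset.Nat.sum_antidiagonal_eq_sum_range_succ_mk]
  simp [Finset.sum_range_succ, PowerSeries.coeff_zero_eq_constantCoeff, h0]

lemma sol_coeff_one {K : ℝ} {j : ℕ} {φ : ℝ⟦X⟧} (h : Sol K j φ) : coeff (R := ℝ) 1 φ = 1 := by
  obtain ⟨h0, hode⟩ := h
  have heq := congrArg (coeff (R := ℝ) 1) hode
  rw [map_add, map_sub] at heq
  rw [PowerSeries.coeff_C_mul] at heq
  have e1 : coeff (R := ℝ) 1 (((2*j+1 : ℕ) : ℝ⟦X⟧) * (X * (d⁄dX ℝ) φ)) =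
      (2*(j:ℝ)+1) * coeff (R := ℝ) 1 φ := by
    rw [show ((2*j+1 : ℕ) : ℝ⟦X⟧) = C (R := ℝ) ((2*j+1 : ℕ) : ℝ) by rw [map_natCast],
      PowerSeries.coeff_C_mul, PowerSeries.coeff_succ_X_mul, PowerSeries.coeff_derivative]
    push_cast; ring
  have e2 : coeff (R := ℝ) 1 (((2*j+1 : ℕ) : ℝ⟦X⟧)^2 * X) = (2*(j:ℝ)+1)^2 := by
    rw [show ((2*j+1 : ℕ) : ℝ⟦X⟧)^2 = C (R := ℝ) (((2*j+1 : ℕ):ℝ))^2 by rw [map_natCast],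
      ← map_pow, PowerSeries.coeff_C_mul, PowerSeries.coeff_one_X]
    push_cast; ring
  have e3 : coeff (R := ℝ) 1 ((((2*j+1)*(2*j) : ℕ) : ℝ⟦X⟧) * φ)
      = ((2*(j:ℝ)+1)*(2*j)) * coeff (R := ℝ) 1 φ := by
    rw [show (((2*j+1)*(2*j) : ℕ) : ℝ⟦X⟧) = C (R := ℝ) ((((2*j+1)*(2*j) : ℕ)):ℝ) by rw [map_natCast],
      PowerSeries.coeff_C_mul]
    push_cast; ring
  have e4 : coeff (R := ℝ) 1 (X * φ^2) = 0 := by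
    rw [PowerSeries.coeff_succ_X_mul]
    simpa [PowerSeries.coeff_zero_eq_constantCoeff] using (by simp [h0] :
      (constantCoeff (R := ℝ)) (φ^2) = 0)
  rw [e1, e2, e3, e4] at heq
  have h2j : (2*(j:ℝ)+1)^2 ≠ 0 := by positivity
  have : (2*(j:ℝ)+1)^2 * coeff (R := ℝ) 1 φ = (2*(j:ℝ)+1)^2 * 1 := by linear_combination heq
  exact mul_left_cancel₀ h2j this

lemma sol_coeff_two {K : ℝ} {j : ℕ} {φ : ℝ⟦X⟧} (h : Sol K j φ) : coeff (R := ℝ) 2 φ = 0 := by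
  obtain ⟨h0, hode⟩ := h
  have heq := congrArg (coeff (R := ℝ) 2) hode
  rw [map_add, map_sub] at heq
  rw [PowerSeries.coeff_C_mul] at heq
  have e1 : coeff (R := ℝ) 2 (((2*j+1 : ℕ) : ℝ⟦X⟧) * (X * (d⁄dX ℝ) φ)) =
      (2*(j:ℝ)+1) * (coeff (R := ℝ) 2 φ * 2) := by
    rw [show ((2*j+1 : ℕ) : ℝ⟦X⟧) = C (R := ℝ) ((2*j+1 : ℕ) : ℝ) by rw [map_natCast],
      PowerSeries.coeff_C_mul, PowerSeries.coeff_succ_X_mul, PowerSeries.coeff_derivative]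
    push_cast; ring
  have e2 : coeff (R := ℝ) 2 (((2*j+1 : ℕ) : ℝ⟦X⟧)^2 * X) = 0 := by
    rw [show ((2*j+1 : ℕ) : ℝ⟦X⟧)^2 = C (R := ℝ) (((2*j+1 : ℕ):ℝ))^2 by rw [map_natCast],
      ← map_pow, PowerSeries.coeff_C_mul, PowerSeries.coeff_X]
    norm_num
  have e3 : coeff (R := ℝ) 2 ((((2*j+1)*(2*j) : ℕ) : ℝ⟦X⟧) * φ)
      = ((2*(j:ℝ)+1)*(2*j)) * coeff (R := ℝ) 2 φ := by
    rw [show (((2*j+1)*(2*j) : ℕ) : ℝ⟦X⟧) = C (R := ℝ) ((((2*j+1)*(2*j) : ℕ)):ℝ) by rw [map_natCast],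
      PowerSeries.coeff_C_mul]
    push_cast; ring
  have e4 : coeff (R := ℝ) 2 (X * φ^2) = 0 := by
    rw [PowerSeries.coeff_succ_X_mul]
    exact coeff_one_sq h0
  rw [e1, e2, e3, e4] at heq
  have h2j : ((2*(j:ℝ)+1)*(2*(j:ℝ)+2)) ≠ 0 := by positivity
  have : ((2*(j:ℝ)+1)*(2*(j:ℝ)+2)) * coeff (R := ℝ) 2 φ = 0 := by linear_combination heq
  exact (mul_eq_zero.mp this).resolve_left h2j

/-- shift by one: `φ = X * shift1 φ` when `φ(0) = 0`. -/
def shift1 (φ : ℝ⟦X⟧) : ℝ⟦X⟧ := mk fun m => coeff (R := ℝ) (m+1) φ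
def shift2 (φ : ℝ⟦X⟧) : ℝ⟦X⟧ := mk fun m => coeff (R := ℝ) (m+2) φ

lemma X_mul_shift1 {φ : ℝ⟦X⟧} (h0 : constantCoeff (R := ℝ) φ = 0) : X * shift1 φ = φ := by
  ext n
  cases n with
  | zero => rw [coeff_zero_X_mul]; simpa [PowerSeries.coeff_zero_eq_constantCoeff] using h0.symm
  | succ n => rw [PowerSeries.coeff_succ_X_mul]; simp [shift1]

lemma shift1_eq {K : ℝ} {j : ℕ} {φ : ℝ⟦X⟧} (h : Sol K j φ) :
    shift1 φ = 1 + X * shift2 φ := by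
  ext n
  cases n with
  | zero =>
    simp only [map_add, PowerSeries.coeff_zero_eq_constantCoeff, map_one]
    rw [show (constantCoeff (R := ℝ)) (X * shift2 φ) = coeff (R := ℝ) 0 (X * shift2 φ) by simp,
      coeff_zero_X_mul]
    simpa [shift1] using sol_coeff_one h
  | succ n =>
    rw [map_add, PowerSeries.coeff_succ_X_mul]
    simp [shift1, shift2, PowerSeries.coeff_one]

/-- next element of the Riccati chain -/
def nextPhi (K : ℝ) (j : ℕ) (φ : ℝ⟦X⟧) : ℝ⟦X⟧ :=
  C (R := ℝ) (((2*j+1)*(2*j+3) : ℕ) / K) * (shift2 φ * (shift1 φ)⁻¹)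

lemma shift1_const_one {K : ℝ} {j : ℕ} {φ : ℝ⟦X⟧} (h : Sol K j φ) :
    constantCoeff (R := ℝ) (shift1 φ) = 1 := by
  rw [← PowerSeries.coeff_zero_eq_constantCoeff]
  simpa [shift1] using sol_coeff_one h

lemma chain_eq {K : ℝ} (hK : K ≠ 0) {j : ℕ} {φ : ℝ⟦X⟧} (h : Sol K j φ) :
    (((2*j+1)*(2*j+3) : ℕ) : ℝ⟦X⟧) * φ
      = (((2*j+1)*(2*j+3) : ℕ) : ℝ⟦X⟧) * X + C (R := ℝ) K * (X * φ * nextPhi K j φ) := by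
  have hv : shift1 φ * (shift1 φ)⁻¹ = 1 :=
    PowerSeries.mul_inv_cancel _ (by rw [shift1_const_one h]; norm_num)
  have key : C (R := ℝ) K * (X * φ * nextPhi K j φ)
      = (((2*j+1)*(2*j+3) : ℕ) : ℝ⟦X⟧) * (X^2 * shift2 φ) := by
    rw [nextPhi]
    have : C (R := ℝ) K * C (R := ℝ) (((2*j+1)*(2*j+3) : ℕ) / K)
        = C (R := ℝ) ((((2*j+1)*(2*j+3) : ℕ)) : ℝ) := by
      rw [← map_mul]; congr 1; field_simp
    calc C (R := ℝ) K * (X * φ * (C (R := ℝ) (((2*j+1)*(2*j+3) : ℕ) / K) * (shift2 φ * (shift1 φ)⁻¹)))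
        = (C (R := ℝ) K * C (R := ℝ) (((2*j+1)*(2*j+3) : ℕ) / K)) * (X * φ * (shift2 φ * (shift1 φ)⁻¹)) := by
          ring
      _ = C (R := ℝ) ((((2*j+1)*(2*j+3) : ℕ)) : ℝ) * (X * φ * (shift2 φ * (shift1 φ)⁻¹)) := by rw [this]
      _ = (((2*j+1)*(2*j+3) : ℕ) : ℝ⟦X⟧) * (X * (X * shift1 φ) * (shift2 φ * (shift1 φ)⁻¹)) := by
          rw [map_natCast, X_mul_shift1 h.1]
      _ = (((2*j+1)*(2*j+3) : ℕ) : ℝ⟦X⟧) * (X^2 * shift2 φ * (shift1 φ * (shift1 φ)⁻¹)) := by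
          ring
      _ = (((2*j+1)*(2*j+3) : ℕ) : ℝ⟦X⟧) * (X^2 * shift2 φ) := by rw [hv, mul_one]
  rw [key]
  have : φ = X + X^2 * shift2 φ := by
    conv_lhs => rw [← X_mul_shift1 h.1, shift1_eq h]
    ring
  conv_lhs => rw [this]
  ring

lemma sol_next {K : ℝ} (hK : K ≠ 0) {j : ℕ} {φ : ℝ⟦X⟧} (h : Sol K j φ) :
    Sol K (j+1) (nextPhi K j φ) := by
  set ψ := nextPhi K j φ with hψ
  have hB := chain_eq hK h
  have hA := h.2
  constructor
  · -- constant coefficient zero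
    rw [hψ, nextPhi]
    rw [map_mul, map_mul, PowerSeries.constantCoeff_C]
    have : constantCoeff (R := ℝ) (shift2 φ) = 0 := by
      rw [← PowerSeries.coeff_zero_eq_constantCoeff]
      simpa [shift2] using sol_coeff_two h
    rw [this]; ring
  · -- the ODE, via cancellation in the domain ℝ⟦X⟧
    have hB' : (((2*j+1)*(2*j+3) : ℕ) : ℝ⟦X⟧) * (d⁄dX ℝ) φ
        = (((2*j+1)*(2*j+3) : ℕ) : ℝ⟦X⟧)
          + C (R := ℝ) K * (φ * ψ) + C (R := ℝ) K * (X * ψ * ((d⁄dX ℝ) φ))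
          + C (R := ℝ) K * (X * φ * ((d⁄dX ℝ) ψ)) := by
      have h' := congrArg (⇑(d⁄dX ℝ)) hB
      simp only [Derivation.leibniz, Derivation.map_natCast, smul_eq_mul,
        PowerSeries.derivative_X, Derivation.leibniz, map_add,
        PowerSeries.derivative_C, smul_zero, mul_zero, zero_add, add_zero, mul_one,
        Derivation.map_smul] at h'
      linear_combination h'
    have key : ((2*j+1 : ℕ) : ℝ⟦X⟧) * C (R := ℝ) K * X * φ *
        ( ((2*(j+1)+1 : ℕ) : ℝ⟦X⟧) * (X * (d⁄dX ℝ) ψ)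
          - ( ((2*(j+1)+1 : ℕ) : ℝ⟦X⟧)^2 * X
              - (((2*(j+1)+1)*(2*(j+1)) : ℕ) : ℝ⟦X⟧) * ψ
              + C (R := ℝ) K * (X * ψ^2) ) ) = 0 := by
      push_cast at hA hB hB' ⊢
      linear_combination
        (-(2*(j:ℝ⟦X⟧)+1) * (2*(j:ℝ⟦X⟧)+3) * X) * hB'
        + ((2*(j:ℝ⟦X⟧)+1) * (2*(j:ℝ⟦X⟧)+3)^2 - (2*(j:ℝ⟦X⟧)+3) * C (R := ℝ) K * X * ψ) * hA
        + (-(2*(j:ℝ⟦X⟧)+1)*(2*(j:ℝ⟦X⟧)+3)*(2*(j:ℝ⟦X⟧))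
            + (2*(j:ℝ⟦X⟧)+3) * C (R := ℝ) K * φ * X + (2*(j:ℝ⟦X⟧)+1) * C (R := ℝ) K * X * ψ) * hB
    have hne1 : ((2*j+1 : ℕ) : ℝ⟦X⟧) ≠ 0 := natCast_ne_zero' (by omega)
    have hne2 : (C (R := ℝ) K) ≠ 0 := C_ne_zero' hK
    have hne3 : (X : ℝ⟦X⟧) ≠ 0 := PowerSeries.X_ne_zero
    have hne4 : φ ≠ 0 := by
      intro hz
      have := sol_coeff_one h
      rw [hz, map_zero] at this
      norm_num at this
    have hzero : ((2*(j+1)+1 : ℕ) : ℝ⟦X⟧) * (X * (d⁄dX ℝ) ψ)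
        - ( ((2*(j+1)+1 : ℕ) : ℝ⟦X⟧)^2 * X
            - (((2*(j+1)+1)*(2*(j+1)) : ℕ) : ℝ⟦X⟧) * ψ
            + C (R := ℝ) K * (X * ψ^2) ) = 0 := by
      have := mul_eq_zero.mp key
      rcases this with h' | h'
      · exfalso
        rcases mul_eq_zero.mp h' with h'' | h''
        · rcases mul_eq_zero.mp h'' with h3 | h3
          · rcases mul_eq_zero.mp h3 with h4 | h4
            · exact hne1 h4
            · exact hne2 h4
          · exact hne3 h3
        · exact hne4 h''
      · exact h'
    exact sub_eq_zero.mp hzero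

/-- `Sol K 0` from the coefficient recursion -/
lemma sol_zero_of_rec (K : ℝ) (s : ℕ → ℝ) (h0 : s 0 = 0)
    (hrec : ∀ m : ℕ, ((m:ℝ)+1) * s (m+1)
      = (if m = 0 then 1 else 0) + K * ∑ i ∈ Finset.range (m+1), s i * s (m-i)) :
    Sol K 0 (mk s) := by
  constructor
  · simp [h0]
  · ext n
    simp only [Nat.mul_zero, Nat.zero_add, Nat.cast_one, one_mul, one_pow, Nat.cast_zero,
      zero_mul, sub_zero, map_add]
    cases n with
    | zero =>
      rw [coeff_zero_X_mul, PowerSeries.coeff_C_mul, coeff_zero_X_mul]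
      simp
    | succ n =>
      rw [PowerSeries.coeff_succ_X_mul, PowerSeries.coeff_derivative,
        PowerSeries.coeff_C_mul, PowerSeries.coeff_succ_X_mul]
      have hsq : coeff (R := ℝ) n ((mk s)^2) = ∑ i ∈ Finset.range (n+1), s i * s (n-i) := by
        rw [sq, PowerSeries.coeff_mul, Finset.Nat.sum_antidiagonal_eq_sum_range_succ_mk]
        simp
      rw [hsq, PowerSeries.coeff_mk, PowerSeries.coeff_X]
      have hif : (if n+1 = 1 then (1:ℝ) else 0) = (if n = 0 then 1 else 0) := by
        by_cases h : n = 0 <;> simp [h]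
      rw [hif]
      linear_combination hrec n

/-- the Riccati chain starting at `F` -/
def Phi (K : ℝ) (F : ℝ⟦X⟧) : ℕ → ℝ⟦X⟧
  | 0 => F
  | j+1 => nextPhi K j (Phi K F j)

lemma sol_Phi {K : ℝ} (hK : K ≠ 0) {F : ℝ⟦X⟧} (hF : Sol K 0 F) :
    ∀ j, Sol K j (Phi K F j) := by
  intro j
  induction j with
  | zero => exact hF
  | succ j ih => exact sol_next hK ih

lemma chain_Phi {K : ℝ} (hK : K ≠ 0) {F : ℝ⟦X⟧} (hF : Sol K 0 F) (j : ℕ) :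
    (((2*j+1)*(2*j+3) : ℕ) : ℝ⟦X⟧) * Phi K F j
      = (((2*j+1)*(2*j+3) : ℕ) : ℝ⟦X⟧) * X + C (R := ℝ) K * (X * Phi K F j * Phi K F (j+1)) :=
  chain_eq hK (sol_Phi hK hF j)

/-- transfer quadruple (α, β, γ, δ) -/
def TQ (K : ℝ) : ℕ → ℝ⟦X⟧ × ℝ⟦X⟧ × ℝ⟦X⟧ × ℝ⟦X⟧
  | 0 => (1, 0, 0, 1)
  | k+1 =>
    (-(C (R := ℝ) K) * X * (TQ K k).2.1,
     (((2*k+1)*(2*k+3) : ℕ) : ℝ⟦X⟧) * (X * (TQ K k).1 + (TQ K k).2.1),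
     -(C (R := ℝ) K) * X * (TQ K k).2.2.2,
     (((2*k+1)*(2*k+3) : ℕ) : ℝ⟦X⟧) * (X * (TQ K k).2.2.1 + (TQ K k).2.2.2))

def alP (K : ℝ) (k : ℕ) : ℝ⟦X⟧ := (TQ K k).1
def beP (K : ℝ) (k : ℕ) : ℝ⟦X⟧ := (TQ K k).2.1
def gaP (K : ℝ) (k : ℕ) : ℝ⟦X⟧ := (TQ K k).2.2.1
def deP (K : ℝ) (k : ℕ) : ℝ⟦X⟧ := (TQ K k).2.2.2

lemma alP_succ (K : ℝ) (k : ℕ) : alP K (k+1) = -(C (R := ℝ) K) * X * beP K k := rfl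
lemma beP_succ (K : ℝ) (k : ℕ) :
    beP K (k+1) = (((2*k+1)*(2*k+3) : ℕ) : ℝ⟦X⟧) * (X * alP K k + beP K k) := rfl
lemma gaP_succ (K : ℝ) (k : ℕ) : gaP K (k+1) = -(C (R := ℝ) K) * X * deP K k := rfl
lemma deP_succ (K : ℝ) (k : ℕ) :
    deP K (k+1) = (((2*k+1)*(2*k+3) : ℕ) : ℝ⟦X⟧) * (X * gaP K k + deP K k) := rfl
lemma alP_zero (K : ℝ) : alP K 0 = 1 := rfl
lemma beP_zero (K : ℝ) : beP K 0 = 0 := rfl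
lemma gaP_zero (K : ℝ) : gaP K 0 = 0 := rfl
lemma deP_zero (K : ℝ) : deP K 0 = 1 := rfl

def Pc : ℕ → ℕ := fun k => ∏ j ∈ Finset.range k, (2*j+1)*(2*j+3)

lemma Pc_pos (k : ℕ) : 0 < Pc k := by
  apply Finset.prod_pos
  intro i _
  positivity

lemma Pc_succ (k : ℕ) : Pc (k+1) = Pc k * ((2*k+1)*(2*k+3)) := Finset.prod_range_succ _ _

/-- (P1): the Möbius/continued-fraction identity -/
lemma TQ_P1 {K : ℝ} (hK : K ≠ 0) {F : ℝ⟦X⟧} (hF : Sol K 0 F) (k : ℕ) :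
    Phi K F 0 * (gaP K k * Phi K F k + deP K k) = alP K k * Phi K F k + beP K k := by
  induction k with
  | zero =>
    rw [alP_zero, beP_zero, gaP_zero, deP_zero]
    ring
  | succ k ih =>
    have hch := chain_Phi hK hF k
    rw [alP_succ, beP_succ, gaP_succ, deP_succ]
    linear_combination
      ((((2*k+1)*(2*k+3) : ℕ) : ℝ⟦X⟧) - C (R := ℝ) K * X * Phi K F (k+1)) * ih
      + (alP K k - Phi K F 0 * gaP K k) * hch

/-- (P2): the determinant of the transfer matrix -/
lemma TQ_P2 (K : ℝ) (k : ℕ) :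
    alP K k * deP K k - beP K k * gaP K k
      = ((Pc k : ℕ) : ℝ⟦X⟧) * (C (R := ℝ) K)^k * X^(2*k) := by
  induction k with
  | zero =>
    rw [alP_zero, beP_zero, gaP_zero, deP_zero]
    simp [Pc]
  | succ k ih =>
    rw [alP_succ, beP_succ, gaP_succ, deP_succ, Pc_succ]
    push_cast
    push_cast at ih
    have : (2:ℝ⟦X⟧)*(k:ℝ⟦X⟧)+1 ≠ 0 := by exact_mod_cast natCast_ne_zero' (n := 2*k+1) (by omega)
    calc -(C (R := ℝ)) K * X * beP K k * ((2*(k:ℝ⟦X⟧)+1)*(2*(k:ℝ⟦X⟧)+3) * (X * gaP K k + deP K k))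
          - (2*(k:ℝ⟦X⟧)+1)*(2*(k:ℝ⟦X⟧)+3) * (X * alP K k + beP K k) * (-(C (R := ℝ)) K * X * deP K k)
        = (2*(k:ℝ⟦X⟧)+1)*(2*(k:ℝ⟦X⟧)+3) * (C (R := ℝ) K) * X^2
            * (alP K k * deP K k - beP K k * gaP K k) := by ring
      _ = _ := by rw [ih]; ring

/-- (P4): the remainder identity -/
lemma TQ_P4 {K : ℝ} (hK : K ≠ 0) {F : ℝ⟦X⟧} (hF : Sol K 0 F) (k : ℕ) :
    (gaP K k * Phi K F k + deP K k) * (deP K k * Phi K F 0 - beP K k)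
      = ((Pc k : ℕ) : ℝ⟦X⟧) * (C (R := ℝ) K)^k * X^(2*k) * Phi K F k := by
  linear_combination (deP K k) * TQ_P1 hK hF k + (Phi K F k) * TQ_P2 K k

/-- degree bounds for the transfer quadruple -/
lemma TQ_deg (K : ℝ) (k : ℕ) : ∀ m, k < m →
    coeff (R := ℝ) m (alP K k) = 0 ∧ coeff (R := ℝ) m (beP K k) = 0 ∧
    coeff (R := ℝ) m (gaP K k) = 0 ∧ coeff (R := ℝ) m (deP K k) = 0 := by
  induction k with
  | zero =>
    intro m hm
    rw [alP_zero, beP_zero, gaP_zero, deP_zero]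
    refine ⟨?_, by simp, ?_, ?_⟩ <;>
      simp [PowerSeries.coeff_one, Nat.pos_iff_ne_zero.mp hm]
  | succ k ih =>
    intro m hm
    obtain ⟨m, rfl⟩ : ∃ m', m = m' + 1 := ⟨m - 1, by omega⟩
    have hm' : k < m := by omega
    obtain ⟨ha, hb, hg, hd⟩ := ih m hm'
    have hXc : ∀ f : ℝ⟦X⟧, coeff (R := ℝ) m f = 0 → coeff (R := ℝ) (m+1) (-(C (R := ℝ) K) * X * f) = 0 := by
      intro f hf
      have : -(C (R := ℝ) K) * X * f = C (R := ℝ) (-K) * (X * f) := by rw [map_neg]; ring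
      rw [this, PowerSeries.coeff_C_mul, PowerSeries.coeff_succ_X_mul, hf, mul_zero]
    have hNc : ∀ f g : ℝ⟦X⟧, coeff (R := ℝ) m f = 0 → coeff (R := ℝ) (m+1) g = 0 →
        coeff (R := ℝ) (m+1) ((((2*k+1)*(2*k+3) : ℕ) : ℝ⟦X⟧) * (X * f + g)) = 0 := by
      intro f g hf hg
      rw [show (((2*k+1)*(2*k+3) : ℕ) : ℝ⟦X⟧) = C (R := ℝ) ((((2*k+1)*(2*k+3) : ℕ)) : ℝ) by
        rw [map_natCast], PowerSeries.coeff_C_mul, map_add, PowerSeries.coeff_succ_X_mul,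
        hf, hg]
      ring
    refine ⟨?_, ?_, ?_, ?_⟩
    · rw [alP_succ]; exact hXc _ hb
    · rw [beP_succ]; exact hNc _ _ ha (ih (m+1) (by omega)).2.1
    · rw [gaP_succ]; exact hXc _ hd
    · rw [deP_succ]; exact hNc _ _ hg (ih (m+1) (by omega)).2.2.2

lemma gaP_const (K : ℝ) (k : ℕ) : constantCoeff (R := ℝ) (gaP K k) = 0 := by
  cases k with
  | zero => rw [gaP_zero]; simp
  | succ k =>
    rw [gaP_succ]
    rw [map_mul, map_mul]
    have : constantCoeff (R := ℝ) (X : ℝ⟦X⟧) = 0 := by simp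
    rw [this]; ring

lemma deP_const (K : ℝ) (k : ℕ) : constantCoeff (R := ℝ) (deP K k) = (Pc k : ℝ) := by
  induction k with
  | zero => rw [deP_zero]; simp [Pc]
  | succ k ih =>
    rw [deP_succ, map_mul, map_add, map_mul]
    have hX : constantCoeff (R := ℝ) (X : ℝ⟦X⟧) = 0 := by simp
    rw [hX, map_natCast, ih, Pc_succ]
    push_cast
    ring

section Extraction
variable {K : ℝ} (hK : K ≠ 0) {F : ℝ⟦X⟧} (hF : Sol K 0 F)

/-- coefficients of the RHS of (P4) -/
lemma rhs_coeff (k m : ℕ) :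
    coeff (R := ℝ) m (((Pc k : ℕ) : ℝ⟦X⟧) * (C (R := ℝ) K)^k * X^(2*k) * Phi K F k)
      = if 2*k ≤ m then (Pc k : ℝ) * K^k * coeff (R := ℝ) (m - 2*k) (Phi K F k) else 0 := by
  have h1 : (((Pc k : ℕ) : ℝ⟦X⟧) * (C (R := ℝ) K)^k * X^(2*k) * Phi K F k)
      = C (R := ℝ) ((Pc k : ℝ) * K^k) * (X^(2*k) * Phi K F k) := by
    rw [map_mul, map_pow, map_natCast]
    ring
  rw [h1, PowerSeries.coeff_C_mul, PowerSeries.coeff_X_pow_mul']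
  split_ifs <;> simp [mul_assoc]

include hK hF in
lemma W_low (k : ℕ) : ∀ m, m ≤ 2*k → coeff (R := ℝ) m (deP K k * Phi K F 0 - beP K k) = 0 := by
  intro m
  induction m using Nat.strong_induction_on with
  | _ m IH =>
    intro hm
    have hP4 := TQ_P4 hK hF k
    have hcm := congrArg (coeff (R := ℝ) m) hP4
    rw [rhs_coeff, PowerSeries.coeff_mul, Finset.Nat.sum_antidiagonal_eq_sum_range_succ_mk]
      at hcm
    have hrhs0 : (if 2*k ≤ m then (Pc k : ℝ) * K^k * coeff (R := ℝ) (m - 2*k) (Phi K F k) else 0)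
        = 0 := by
      split_ifs with h
      · have : m - 2*k = 0 := by omega
        rw [this]
        have := (sol_Phi hK hF k).1
        rw [PowerSeries.coeff_zero_eq_constantCoeff, this, mul_zero]
      · rfl
    rw [hrhs0] at hcm
    rw [Finset.sum_range_succ' _ m] at hcm
    have hzero : ∀ i ∈ Finset.range m,
        coeff (R := ℝ) (i+1) (gaP K k * Phi K F k + deP K k)
          * coeff (R := ℝ) (m - (i+1)) (deP K k * Phi K F 0 - beP K k) = 0 := by
      intro i hi
      have hi' := Finset.mem_range.mp hi
      rw [IH (m - (i+1)) (by omega) (by omega), mul_zero]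
    rw [Finset.sum_congr rfl hzero, Finset.sum_const_zero, zero_add] at hcm
    have hconst : coeff (R := ℝ) 0 (gaP K k * Phi K F k + deP K k) = (Pc k : ℝ) := by
      rw [PowerSeries.coeff_zero_eq_constantCoeff, map_add, map_mul, gaP_const,
        deP_const, zero_mul, zero_add]
    rw [hconst, Nat.sub_zero] at hcm
    have hPc : (Pc k : ℝ) ≠ 0 := by
      exact_mod_cast Nat.pos_iff_ne_zero.mp (Pc_pos k)
    exact (mul_eq_zero.mp hcm).resolve_left hPc

include hK hF in
lemma W_diag (k : ℕ) : coeff (R := ℝ) (2*k+1) (deP K k * Phi K F 0 - beP K k) = K^k := by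
  have hP4 := TQ_P4 hK hF k
  have hcm := congrArg (coeff (R := ℝ) (2*k+1)) hP4
  rw [rhs_coeff, PowerSeries.coeff_mul, Finset.Nat.sum_antidiagonal_eq_sum_range_succ_mk]
    at hcm
  rw [if_pos (by omega), show 2*k+1 - 2*k = 1 by omega, sol_coeff_one (sol_Phi hK hF k),
    mul_one] at hcm
  rw [Finset.sum_range_succ' _ (2*k+1)] at hcm
  have hzero : ∀ i ∈ Finset.range (2*k+1),
      coeff (R := ℝ) (i+1) (gaP K k * Phi K F k + deP K k)
        * coeff (R := ℝ) (2*k+1 - (i+1)) (deP K k * Phi K F 0 - beP K k) = 0 := by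
    intro i hi
    rw [W_low hK hF k (2*k+1 - (i+1)) (by omega), mul_zero]
  rw [Finset.sum_congr rfl hzero, Finset.sum_const_zero, zero_add] at hcm
  have hconst : coeff (R := ℝ) 0 (gaP K k * Phi K F k + deP K k) = (Pc k : ℝ) := by
    rw [PowerSeries.coeff_zero_eq_constantCoeff, map_add, map_mul, gaP_const,
      deP_const, zero_mul, zero_add]
  rw [hconst, Nat.sub_zero] at hcm
  have hPc : (Pc k : ℝ) ≠ 0 := by
    exact_mod_cast Nat.pos_iff_ne_zero.mp (Pc_pos k)
  exact mul_left_cancel₀ hPc hcm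

include hK hF in
/-- the lower moments vanish -/
lemma mhat_lt (k t : ℕ) (ht : t < k) : coeff (R := ℝ) (k+t+1) (deP K k * Phi K F 0) = 0 := by
  have h1 : coeff (R := ℝ) (k+t+1) (deP K k * Phi K F 0)
      = coeff (R := ℝ) (k+t+1) (deP K k * Phi K F 0 - beP K k) + coeff (R := ℝ) (k+t+1) (beP K k) := by
    rw [map_sub]; ring
  rw [h1, W_low hK hF k (k+t+1) (by omega), (TQ_deg K k (k+t+1) (by omega)).2.1]
  ring

include hK hF in
/-- the diagonal moment -/
lemma mhat_diag (k : ℕ) : coeff (R := ℝ) (2*k+1) (deP K k * Phi K F 0) = K^k := by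
  have h1 : coeff (R := ℝ) (2*k+1) (deP K k * Phi K F 0)
      = coeff (R := ℝ) (2*k+1) (deP K k * Phi K F 0 - beP K k) + coeff (R := ℝ) (2*k+1) (beP K k) := by
    rw [map_sub]; ring
  rw [h1, W_diag hK hF k, (TQ_deg K k (2*k+1) (by omega)).2.1]
  ring

end Extraction

section Det
open scoped Matrix
variable {K : ℝ} (hK : K ≠ 0) {F : ℝ⟦X⟧} (hF : Sol K 0 F)

include hK hF in
theorem det_main (n : ℕ) :
    (Matrix.of fun i j : Fin n => coeff (R := ℝ) (i.1+j.1+1) F).det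
      = (∏ k ∈ Finset.range n, K^k) / (∏ k ∈ Finset.range n, (Pc k : ℝ)) := by
  set A : Matrix (Fin n) (Fin n) ℝ := Matrix.of fun i j : Fin n => coeff (R := ℝ) (i.1+j.1+1) F
    with hAdef
  set Cm : Matrix (Fin n) (Fin n) ℝ :=
    Matrix.of (fun k t : Fin n =>
      if (t:ℕ) ≤ (k:ℕ) then coeff (R := ℝ) ((k:ℕ) - (t:ℕ)) (deP K (k:ℕ)) else 0)
    with hCdef
  have hFPhi : Phi K F 0 = F := rfl
  have hml : ∀ k t : ℕ, t < k → coeff (R := ℝ) (k+t+1) (deP K k * F) = 0 := by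
    intro k t ht
    have := mhat_lt hK hF k t ht
    rwa [hFPhi] at this
  have hmd : ∀ k : ℕ, coeff (R := ℝ) (k+k+1) (deP K k * F) = K^k := by
    intro k
    have := mhat_diag hK hF k
    rw [hFPhi] at this
    rw [show k+k+1 = 2*k+1 by omega]
    exact this
  -- inner sum identity
  have hinner : ∀ (l : Fin n) (t : ℕ),
      (∑ u : Fin n, Cm l u * coeff (R := ℝ) (t + (u:ℕ) + 1) F)
        = coeff (R := ℝ) ((l:ℕ) + t + 1) (deP K (l:ℕ) * F) := by
    intro l t
    set L := (l:ℕ) with hL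
    have h1 : coeff (R := ℝ) (L+t+1) (deP K L * F)
        = ∑ p ∈ Finset.range (L+1), coeff (R := ℝ) p (deP K L) * coeff (R := ℝ) (L+t+1-p) F := by
      rw [PowerSeries.coeff_mul, Finset.Nat.sum_antidiagonal_eq_sum_range_succ_mk]
      refine (Finset.sum_subset (Finset.range_subset_range.mpr (by omega)) ?_).symm
      intro p hp hnp
      have hpl : L < p := by
        rcases Nat.lt_or_ge L p with h | h
        · exact h
        · exact absurd (Finset.mem_range.mpr (by omega)) hnp
      rw [(TQ_deg K L p hpl).2.2.2, zero_mul]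
    have h2 : ∑ p ∈ Finset.range (L+1), coeff (R := ℝ) p (deP K L) * coeff (R := ℝ) (L+t+1-p) F
        = ∑ u ∈ Finset.range (L+1), coeff (R := ℝ) (L-u) (deP K L) * coeff (R := ℝ) (t+u+1) F := by
      rw [← Finset.sum_range_reflect
        (fun p => coeff (R := ℝ) p (deP K L) * coeff (R := ℝ) (L+t+1-p) F) (L+1)]
      refine Finset.sum_congr rfl ?_
      intro u hu
      have hu' := Finset.mem_range.mp hu
      have e1 : L+1-1-u = L-u := by omega
      have e2 : L+t+1-(L-u) = t+u+1 := by omega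
      rw [e1, e2]
    have h3 : (∑ u : Fin n, Cm l u * coeff (R := ℝ) (t + (u:ℕ) + 1) F)
        = ∑ u ∈ Finset.range n,
            (if u ≤ L then coeff (R := ℝ) (L-u) (deP K L) else 0) * coeff (R := ℝ) (t+u+1) F := by
      rw [← Fin.sum_univ_eq_sum_range
        (fun u => (if u ≤ L then coeff (R := ℝ) (L-u) (deP K L) else 0) * coeff (R := ℝ) (t+u+1) F) n]
      exact Finset.sum_congr rfl fun u _ => rfl
    have h4 : ∑ u ∈ Finset.range n,
        (if u ≤ L then coeff (R := ℝ) (L-u) (deP K L) else 0) * coeff (R := ℝ) (t+u+1) F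
        = ∑ u ∈ Finset.range (L+1), coeff (R := ℝ) (L-u) (deP K L) * coeff (R := ℝ) (t+u+1) F := by
      refine (Finset.sum_subset (Finset.range_subset_range.mpr (by omega : L+1 ≤ n)) ?_).symm.trans ?_
      · intro u hu hnu
        have : L < u := by
          rcases Nat.lt_or_ge L u with h | h
          · exact h
          · exact absurd (Finset.mem_range.mpr (by omega)) hnu
        rw [if_neg (by omega), zero_mul]
      · refine Finset.sum_congr rfl ?_
        intro u hu
        rw [if_pos (by have := Finset.mem_range.mp hu; omega)]
    rw [h3, h4, ← h2, ← h1]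
  -- entries of the conjugated matrix
  have hentry : ∀ k l : Fin n, (Cm * A * Cmᵀ) k l
      = ∑ u : Fin n, Cm k u * coeff (R := ℝ) ((l:ℕ) + (u:ℕ) + 1) (deP K (l:ℕ) * F) := by
    intro k l
    rw [Matrix.mul_apply]
    have e1 : ∀ t : Fin n, (Cm * A) k t * Cmᵀ t l
        = ∑ u : Fin n, Cm l t * (Cm k u * A u t) := by
      intro t
      rw [Matrix.mul_apply, Matrix.transpose_apply, Finset.sum_mul]
      refine Finset.sum_congr rfl fun u _ => by ring
    rw [Finset.sum_congr rfl fun t _ => e1 t, Finset.sum_comm]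
    refine Finset.sum_congr rfl fun u _ => ?_
    rw [← hinner l (u:ℕ)]
    rw [Finset.mul_sum]
    refine Finset.sum_congr rfl fun t _ => ?_
    have : A u t = coeff (R := ℝ) ((u:ℕ) + (t:ℕ) + 1) F := rfl
    rw [this]
    ring
  have hM : Cm * A * Cmᵀ
      = Matrix.diagonal (fun k : Fin n => (Pc (k:ℕ) : ℝ) * K^(k:ℕ)) := by
    have hsymA : Aᵀ = A := by
      ext i j
      show A j i = A i j
      show coeff (R := ℝ) ((j:ℕ)+(i:ℕ)+1) F = coeff (R := ℝ) ((i:ℕ)+(j:ℕ)+1) F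
      rw [Nat.add_comm (j:ℕ) (i:ℕ)]
    have hsym : (Cm * A * Cmᵀ)ᵀ = Cm * A * Cmᵀ := by
      rw [Matrix.transpose_mul, Matrix.transpose_mul, Matrix.transpose_transpose,
        ← Matrix.mul_assoc, hsymA]
    have hupper : ∀ k l : Fin n, (k:ℕ) ≤ (l:ℕ) → (Cm * A * Cmᵀ) k l
        = if k = l then (Pc (k:ℕ) : ℝ) * K^(k:ℕ) else 0 := by
      intro k l hkl
      rw [hentry k l]
      rcases eq_or_lt_of_le hkl with heq | hlt
      · have hkeq : k = l := Fin.ext heq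
        subst hkeq
        rw [if_pos rfl]
        rw [Finset.sum_eq_single k]
        · have : Cm k k = coeff (R := ℝ) 0 (deP K (k:ℕ)) := by
            show (if (k:ℕ) ≤ (k:ℕ) then _ else _) = _
            rw [if_pos le_rfl, Nat.sub_self]
          rw [this, PowerSeries.coeff_zero_eq_constantCoeff, deP_const, hmd (k:ℕ)]
        · intro u _ hu
          rcases Nat.lt_or_ge (u:ℕ) (k:ℕ) with h | h
          · rw [hml (k:ℕ) (u:ℕ) h, mul_zero]
          · have : (k:ℕ) < (u:ℕ) := by
              rcases Nat.eq_or_lt_of_le h with h' | h'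
              · exact absurd (Fin.ext h'.symm) hu
              · exact h'
            show (if (u:ℕ) ≤ (k:ℕ) then _ else _) * _ = 0
            rw [if_neg (by omega), zero_mul]
        · intro h
          exact absurd (Finset.mem_univ k) h
      · rw [if_neg (by intro h; rw [h] at hlt; omega)]
        refine Finset.sum_eq_zero fun u _ => ?_
        rcases le_or_gt (u:ℕ) (k:ℕ) with h | h
        · rw [hml (l:ℕ) (u:ℕ) (by omega), mul_zero]
        · show (if (u:ℕ) ≤ (k:ℕ) then _ else _) * _ = 0
          rw [if_neg (by omega), zero_mul]
    ext k l
    rcases le_or_gt (k:ℕ) (l:ℕ) with h | h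
    · rw [hupper k l h, Matrix.diagonal_apply]
    · have h1 : (Cm * A * Cmᵀ) k l = (Cm * A * Cmᵀ) l k := by
        conv_lhs => rw [← hsym]
        rw [Matrix.transpose_apply]
      rw [h1, hupper l k (by omega), Matrix.diagonal_apply]
      have hne : k ≠ l := by intro hc; rw [hc] at h; omega
      rw [if_neg (by intro hc; exact hne (hc ▸ rfl)), if_neg hne]
  -- take determinants
  have hdet := congrArg Matrix.det hM
  rw [Matrix.det_mul, Matrix.det_mul, Matrix.det_transpose, Matrix.det_diagonal] at hdet
  have hdetC : Cm.det = ∏ k : Fin n, (Pc (k:ℕ) : ℝ) := by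
    rw [Matrix.det_of_lowerTriangular Cm (by
      intro i j hij
      have : (i:ℕ) < (j:ℕ) := hij
      show (if (j:ℕ) ≤ (i:ℕ) then _ else _) = 0
      rw [if_neg (by omega)])]
    refine Finset.prod_congr rfl fun k _ => ?_
    show (if (k:ℕ) ≤ (k:ℕ) then _ else _) = _
    rw [if_pos le_rfl, Nat.sub_self, PowerSeries.coeff_zero_eq_constantCoeff, deP_const]
  rw [hdetC] at hdet
  have hPcne : (∏ k : Fin n, (Pc (k:ℕ) : ℝ)) ≠ 0 := by
    refine Finset.prod_ne_zero_iff.mpr fun k _ => ?_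
    exact_mod_cast Nat.pos_iff_ne_zero.mp (Pc_pos (k:ℕ))
  have hsplit : (∏ k : Fin n, ((Pc (k:ℕ) : ℝ) * K^(k:ℕ)))
      = (∏ k : Fin n, (Pc (k:ℕ) : ℝ)) * (∏ k : Fin n, K^(k:ℕ)) := by
    rw [Finset.prod_mul_distrib]
  rw [hsplit] at hdet
  have hsolve : A.det = (∏ k : Fin n, K^(k:ℕ)) / (∏ k : Fin n, (Pc (k:ℕ) : ℝ)) := by
    rw [eq_div_iff hPcne]
    refine mul_left_cancel₀ hPcne ?_
    linear_combination hdet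
  rw [hsolve, Fin.prod_univ_eq_prod_range (fun k => K^k) n,
    Fin.prod_univ_eq_prod_range (fun k => (Pc k : ℝ)) n]

end Det

section Arith

lemma Pc_fact (k : ℕ) :
    (Pc k : ℝ) * (4^k * ((k.factorial : ℝ))^2)
      = (((2*k).factorial : ℝ)) * (((2*k+1).factorial : ℝ)) := by
  induction k with
  | zero => simp [Pc]
  | succ k ih =>
    rw [Pc_succ]
    have e1 : 2*(k+1) = (2*k+1)+1 := by omega
    rw [e1, Nat.factorial_succ ((2*k+1)+1), Nat.factorial_succ (2*k+1), Nat.factorial_succ k]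
    have hb : (((2*k+1).factorial : ℝ)) = ((2*k+1 : ℕ) : ℝ) * (((2*k).factorial : ℝ)) := by
      rw [show 2*k+1 = (2*k)+1 by omega, Nat.factorial_succ (2*k)]
      push_cast; ring
    push_cast
    push_cast at ih hb
    linear_combination (4*((k:ℝ)+1)^2*(2*(k:ℝ)+1)*(2*(k:ℝ)+3)) * ih
      - ((2*(k:ℝ)+2)^2*(2*(k:ℝ)+3)*(((2*k+1).factorial : ℝ))) * hb

lemma teles (a : ℕ) : ∀ b : ℕ,
    ∏ j ∈ Finset.range b, ((a+j).factorial : ℝ)/((a+1+j).factorial : ℝ)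
      = (a.factorial : ℝ)/((a+b).factorial : ℝ) := by
  intro b
  induction b with
  | zero =>
    simp only [Finset.range_zero, Finset.prod_empty, Nat.add_zero]
    rw [div_self (Nat.cast_ne_zero.mpr (Nat.factorial_ne_zero a))]
  | succ b ih =>
    rw [Finset.prod_range_succ, ih]
    have h1 : ((a+b).factorial : ℝ) ≠ 0 := Nat.cast_ne_zero.mpr (Nat.factorial_ne_zero _)
    have e : a+1+b = (a+b)+1 := by omega
    have e2 : a+(b+1) = (a+b)+1 := by omega
    rw [e, e2, Nat.factorial_succ (a+b)]
    have h3 : (((a+b : ℕ)):ℝ)+1 ≠ 0 := by positivity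
    push_cast
    field_simp

lemma Rstep (n : ℕ) :
    ∏ j ∈ Finset.range (n+1), ((j.factorial : ℝ))/(((n+1+j).factorial : ℝ))
      = (∏ j ∈ Finset.range n, ((j.factorial : ℝ))/(((n+j).factorial : ℝ)))
        * (((n.factorial : ℝ))^2/((((2*n).factorial : ℝ))*(((2*n+1).factorial : ℝ)))) := by
  rw [Finset.prod_range_succ]
  have hsplit : ∀ j ∈ Finset.range n,
      ((j.factorial : ℝ))/(((n+1+j).factorial : ℝ))
        = (((j.factorial : ℝ))/(((n+j).factorial : ℝ)))
          * ((((n+j).factorial : ℝ))/(((n+1+j).factorial : ℝ))) := by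
    intro j _
    have h1 : (((n+j).factorial : ℝ)) ≠ 0 := Nat.cast_ne_zero.mpr (Nat.factorial_ne_zero _)
    field_simp
  rw [Finset.prod_congr rfl hsplit, Finset.prod_mul_distrib, teles n n]
  have e1 : n + n = 2*n := by omega
  have e2 : n+1+n = 2*n+1 := by omega
  rw [e1, e2]
  ring

lemma PP : ∀ n : ℕ, (2:ℝ)^(n*(n-1)) * (∏ k ∈ Finset.range n, (Pc k : ℝ))
    * (∏ j ∈ Finset.range n, ((j.factorial : ℝ))/(((n+j).factorial : ℝ))) = 1 := by
  intro n
  induction n with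
  | zero => simp
  | succ n ih =>
    rw [Finset.prod_range_succ, Rstep n]
    have e1 : (n+1)*((n+1)-1) = n*(n-1) + 2*n := by cases n <;> simp <;> ring_nf <;> omega
    rw [e1, pow_add]
    have h2n : ((2:ℝ))^(2*n) = 4^n := by rw [pow_mul]; norm_num
    have hfac := Pc_fact n
    have h1 : (((2*n).factorial : ℝ)) ≠ 0 := Nat.cast_ne_zero.mpr (Nat.factorial_ne_zero _)
    have h2 : (((2*n+1).factorial : ℝ)) ≠ 0 := Nat.cast_ne_zero.mpr (Nat.factorial_ne_zero _)
    calc (2:ℝ)^(n*(n-1)) * 2^(2*n) * ((∏ k ∈ Finset.range n, (Pc k : ℝ)) * (Pc n : ℝ))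
          * ((∏ j ∈ Finset.range n, ((j.factorial:ℝ))/(((n+j).factorial:ℝ)))
            * (((n.factorial:ℝ))^2/((((2*n).factorial:ℝ))*(((2*n+1).factorial:ℝ)))))
        = ((2:ℝ)^(n*(n-1)) * (∏ k ∈ Finset.range n, (Pc k : ℝ))
            * (∏ j ∈ Finset.range n, ((j.factorial:ℝ))/(((n+j).factorial:ℝ))))
          * (2^(2*n) * (Pc n : ℝ)
              * (((n.factorial:ℝ))^2/((((2*n).factorial:ℝ))*(((2*n+1).factorial:ℝ))))) := by
          ring
      _ = 1 := by
          rw [ih, h2n, one_mul]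
          field_simp
          linarith [hfac]

lemma K_prod (K : ℝ) (n : ℕ) :
    ∏ k ∈ Finset.range n, K^k = K^(n*(n-1)/2) := by
  rw [Finset.prod_pow_eq_pow_sum]
  congr 1
  have := Finset.sum_range_id_mul_two n
  omega

lemma Icc_prod (n : ℕ) :
    (∏ k ∈ Finset.Icc 1 n, (((n - k).factorial : ℝ)) / (((2 * n - k).factorial : ℝ)))
      = ∏ j ∈ Finset.range n, ((j.factorial : ℝ))/(((n+j).factorial : ℝ)) := by
  refine Finset.prod_bij' (fun k _ => n - k) (fun j _ => n - j) ?_ ?_ ?_ ?_ ?_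
  · intro k hk
    have hk' := Finset.mem_Icc.mp hk
    have hh : n - k < n := by omega
    exact Finset.mem_range.mpr hh
  · intro j hj
    have hj' := Finset.mem_range.mp hj
    have hh : 1 ≤ n - j ∧ n - j ≤ n := ⟨by omega, by omega⟩
    exact Finset.mem_Icc.mpr hh
  · intro k hk
    have := Finset.mem_Icc.mp hk
    show n - (n - k) = k
    omega
  · intro j hj
    have := Finset.mem_range.mp hj
    show n - (n - j) = j
    omega
  · intro k hk
    have := Finset.mem_Icc.mp hk
    have e1 : 2*n - k = n + (n - k) := by omega
    rw [e1]

end Arith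

theorem stmt15' (K x : ℝ) (n : ℕ) (hn : 1 ≤ n) (f₁ f₂ : ℝ → ℝ)
    (hf : IsFundPair (fun _ => K) x f₁ f₂) :
    (Matrix.of fun i j : Fin n =>
      iteratedDeriv (i.1 + j.1 + 1) (fun t => f₂ t / f₁ t) x /
        (Nat.factorial (i.1 + j.1 + 1) : ℝ)).det =
      2 ^ (n * (n - 1)) * K ^ (n * (n - 1) / 2) *
        ∏ k ∈ Finset.Icc 1 n, ((n - k).factorial : ℝ) / ((2 * n - k).factorial : ℝ) := by
  classical
  obtain ⟨h0, hrec⟩ := part1 K x f₁ f₂ hf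
  set s : ℕ → ℝ :=
    fun m => iteratedDeriv m (fun t => f₂ t / f₁ t) x / (Nat.factorial m : ℝ) with hs
  have hmat : (Matrix.of fun i j : Fin n =>
      iteratedDeriv (i.1 + j.1 + 1) (fun t => f₂ t / f₁ t) x /
        (Nat.factorial (i.1 + j.1 + 1) : ℝ))
      = Matrix.of (fun i j : Fin n => s (i.1 + j.1 + 1)) := rfl
  have hs1 : s 1 = 1 := by
    have := hrec 0
    simp only [if_pos rfl] at this
    rw [Finset.sum_range_one, h0] at this
    push_cast at this
    linarith [show s 1 = iteratedDeriv 1 (fun t => f₂ t / f₁ t) x / ↑(Nat.factorial 1) from rfl]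
  by_cases hK : K = 0
  · subst hK
    rcases Nat.eq_or_lt_of_le hn with h1 | h2
    · -- n = 1
      subst h1
      rw [hmat, Matrix.det_fin_one]
      have : (Matrix.of fun i j : Fin 1 => s (i.1 + j.1 + 1)) 0 0 = s 1 := rfl
      rw [this, hs1]
      rw [show (1 : ℕ) * (1-1) = 0 by norm_num]
      norm_num
    · -- n ≥ 2, determinant has a zero row
      have hzero : ∀ m : ℕ, 1 ≤ m → s (m+1) = 0 := by
        intro m hm
        have := hrec m
        rw [if_neg (by omega), zero_mul, add_zero] at this
        have hm1 : ((m:ℝ)+1) ≠ 0 := by positivity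
        have := mul_eq_zero.mp (by linarith [this] : ((m:ℝ)+1) * s (m+1) = 0)
        rcases this with h | h
        · exact absurd h hm1
        · exact h
      rw [hmat]
      rw [Matrix.det_eq_zero_of_row_eq_zero (⟨1, by omega⟩ : Fin n) (by
        intro j
        have : (Matrix.of fun i j : Fin n => s (i.1 + j.1 + 1)) ⟨1, by omega⟩ j
            = s ((1 + j.1) + 1) := rfl
        rw [this, hzero (1 + j.1) (by omega)])]
      have hexp : n * (n-1) / 2 ≠ 0 := by
        have h2' : 2 ≤ n := h2
        have : n ≤ n * (n-1) := by
          calc n = n * 1 := by ring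
          _ ≤ n * (n-1) := Nat.mul_le_mul_left n (by omega)
        omega
      rw [zero_pow hexp]
      ring
  · -- main case
    set F : ℝ⟦X⟧ := PowerSeries.mk s with hF
    have hsol : Sol K 0 F := sol_zero_of_rec K s h0 hrec
    have hmat2 : (Matrix.of fun i j : Fin n => s (i.1 + j.1 + 1))
        = Matrix.of (fun i j : Fin n => PowerSeries.coeff (R := ℝ) (i.1 + j.1 + 1) F) := by
      ext i j
      show s (i.1 + j.1 + 1) = PowerSeries.coeff (R := ℝ) (i.1 + j.1 + 1) F
      rw [hF, PowerSeries.coeff_mk]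
    rw [hmat, hmat2, det_main hK hsol n, K_prod, Icc_prod]
    have hPne : (∏ k ∈ Finset.range n, (Pc k : ℝ)) ≠ 0 := by
      refine Finset.prod_ne_zero_iff.mpr fun k _ => ?_
      exact_mod_cast Nat.pos_iff_ne_zero.mp (Pc_pos k)
    rw [div_eq_iff hPne]
    linear_combination (-(K^(n*(n-1)/2))) * PP n


end Stmt15Aux
end

noncomputable section

open MeasureTheory Filter

/-- For the constant function `θ ≡ K`, the `n×n` Hankel determinant of
the Schwarzians equals `2^{n(n-1)}·K^{n(n-1)/2}·∏_{k=1}^{n}(n-k)!/(2n-k)!`. -/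
theorem stmt15 (K x : ℝ) (n : ℕ) (hn : 1 ≤ n) (f₁ f₂ : ℝ → ℝ)
    (hf : IsFundPair (fun _ => K) x f₁ f₂) :
    (Matrix.of fun i j : Fin n =>
      iteratedDeriv (i.1 + j.1 + 1) (fun t => f₂ t / f₁ t) x /
        (Nat.factorial (i.1 + j.1 + 1) : ℝ)).det =
      2 ^ (n * (n - 1)) * K ^ (n * (n - 1) / 2) *
        ∏ k ∈ Finset.Icc 1 n, ((n - k).factorial : ℝ) / ((2 * n - k).factorial : ℝ) := by
  classical
  obtain ⟨h0, hrec⟩ := Stmt15Aux.part1 K x f₁ f₂ hf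
  set s : ℕ → ℝ :=
    fun m => iteratedDeriv m (fun t => f₂ t / f₁ t) x / (Nat.factorial m : ℝ) with hs
  have hmat : (Matrix.of fun i j : Fin n =>
      iteratedDeriv (i.1 + j.1 + 1) (fun t => f₂ t / f₁ t) x /
        (Nat.factorial (i.1 + j.1 + 1) : ℝ))
      = Matrix.of (fun i j : Fin n => s (i.1 + j.1 + 1)) := rfl
  have hs1 : s 1 = 1 := by
    have := hrec 0
    simp only [if_pos rfl] at this
    rw [Finset.sum_range_one, h0] at this
    push_cast at this
    linarith [show s 1 = iteratedDeriv 1 (fun t => f₂ t / f₁ t) x / ↑(Nat.factorial 1) from rfl]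
  by_cases hK : K = 0
  · subst hK
    rcases Nat.eq_or_lt_of_le hn with h1 | h2
    · -- n = 1
      subst h1
      rw [hmat, Matrix.det_fin_one]
      have : (Matrix.of fun i j : Fin 1 => s (i.1 + j.1 + 1)) 0 0 = s 1 := rfl
      rw [this, hs1]
      rw [show (1 : ℕ) * (1-1) = 0 by norm_num]
      norm_num
    · -- n ≥ 2, determinant has a zero row
      have hzero : ∀ m : ℕ, 1 ≤ m → s (m+1) = 0 := by
        intro m hm
        have := hrec m
        rw [if_neg (by omega), zero_mul, add_zero] at this
        have hm1 : ((m:ℝ)+1) ≠ 0 := by positivity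
        have := mul_eq_zero.mp (by linarith [this] : ((m:ℝ)+1) * s (m+1) = 0)
        rcases this with h | h
        · exact absurd h hm1
        · exact h
      rw [hmat]
      rw [Matrix.det_eq_zero_of_row_eq_zero (⟨1, by omega⟩ : Fin n) (by
        intro j
        have : (Matrix.of fun i j : Fin n => s (i.1 + j.1 + 1)) ⟨1, by omega⟩ j
            = s ((1 + j.1) + 1) := rfl
        rw [this, hzero (1 + j.1) (by omega)])]
      have hexp : n * (n-1) / 2 ≠ 0 := by
        have h2' : 2 ≤ n := h2
        have : n ≤ n * (n-1) := by
          calc n = n * 1 := by ring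
          _ ≤ n * (n-1) := Nat.mul_le_mul_left n (by omega)
        omega
      rw [zero_pow hexp]
      ring
  · -- main case
    set F : PowerSeries ℝ := PowerSeries.mk s with hF
    have hsol : Stmt15Aux.Sol K 0 F := Stmt15Aux.sol_zero_of_rec K s h0 hrec
    have hmat2 : (Matrix.of fun i j : Fin n => s (i.1 + j.1 + 1))
        = Matrix.of (fun i j : Fin n => PowerSeries.coeff (R := ℝ) (i.1 + j.1 + 1) F) := by
      ext i j
      show s (i.1 + j.1 + 1) = PowerSeries.coeff (R := ℝ) (i.1 + j.1 + 1) F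
      rw [hF, PowerSeries.coeff_mk]
    rw [hmat, hmat2, Stmt15Aux.det_main hK hsol n, Stmt15Aux.K_prod, Stmt15Aux.Icc_prod]
    have hPne : (∏ k ∈ Finset.range n, (Stmt15Aux.Pc k : ℝ)) ≠ 0 := by
      refine Finset.prod_ne_zero_iff.mpr fun k _ => ?_
      exact_mod_cast Nat.pos_iff_ne_zero.mp (Stmt15Aux.Pc_pos k)
    rw [div_eq_iff hPne]
    linear_combination (-(K^(n*(n-1)/2))) * Stmt15Aux.PP n


end
end

section
/- Let θ : ℝ → ℝ be smooth. Then 𝒮_{2n}^θ(x) = 0 for every integer n ≥ 1 and every x ∈ ℝ if and only if θ is a constant function. -/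
noncomputable section Aux16
open MeasureTheory intervalIntegral Set

lemma primitive_hasDerivAt {h : ℝ → ℝ} (hc : Continuous h) (x t : ℝ) :
    HasDerivAt (fun u => ∫ s in x..u, h s) (h t) t :=
  intervalIntegral.integral_hasDerivAt_right (hc.intervalIntegrable _ _)
    (hc.stronglyMeasurable.stronglyMeasurableAtFilter) hc.continuousAt

lemma primitive_continuous {h : ℝ → ℝ} (hc : Continuous h) (x : ℝ) :
    Continuous (fun u => ∫ s in x..u, h s) := by
  have : Differentiable ℝ (fun u => ∫ s in x..u, h s) :=
    fun t => (primitive_hasDerivAt hc x t).differentiableAt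
  exact this.continuous

lemma abs_int_abs_pow (x t : ℝ) (n : ℕ) :
    |∫ s in x..t, |s - x| ^ n| = |t - x| ^ (n + 1) / (n + 1) := by
  have h1 : (∫ s in x..t, |s - x| ^ n) = ∫ u in (0:ℝ)..(t - x), |u| ^ n := by
    have := intervalIntegral.integral_comp_sub_right (a := x) (b := t) (fun u => |u| ^ n) x
    simpa using this
  have hnn : (0:ℝ) < (n:ℝ) + 1 := by positivity
  rcases le_or_gt 0 (t - x) with hy | hy
  · have h2 : (∫ u in (0:ℝ)..(t - x), |u| ^ n) = ∫ u in (0:ℝ)..(t - x), u ^ n := by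
      apply intervalIntegral.integral_congr
      intro u hu
      rw [Set.uIcc_of_le hy] at hu
      simp only []
      rw [abs_of_nonneg hu.1]
    rw [h1, h2, integral_pow, zero_pow (by omega : n + 1 ≠ 0), sub_zero,
      abs_of_nonneg hy]
    rw [abs_of_nonneg]
    positivity
  · have h2 : (∫ u in (0:ℝ)..(t - x), |u| ^ n) = ∫ u in (0:ℝ)..(t - x), (-u) ^ n := by
      apply intervalIntegral.integral_congr
      intro u hu
      rw [Set.uIcc_of_ge hy.le] at hu
      simp only []
      rw [abs_of_nonpos hu.2]
    rw [h1, h2, intervalIntegral.integral_comp_neg (fun u => u ^ n), integral_pow, neg_zero,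
      zero_pow (by omega : n + 1 ≠ 0), zero_sub, abs_of_nonpos (le_of_lt hy)]
    have h3 : (0:ℝ) ≤ (-(t - x)) ^ (n + 1) :=
      pow_nonneg (by linarith : (0:ℝ) ≤ -(t - x)) _
    have h4 : -(-(t - x)) ^ (n + 1) / ((n:ℝ) + 1) ≤ 0 := by
      apply div_nonpos_of_nonpos_of_nonneg _ hnn.le
      simp only [neg_nonpos]
      exact h3
    rw [abs_of_nonpos h4]
    ring

noncomputable def picard (θ : ℝ → ℝ) (x c₀ c₁ : ℝ) : ℕ → ℝ → ℝ
  | 0 => fun t => c₀ + c₁ * (t - x)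
  | (n+1) => fun t =>
      -(t * (∫ s in x..t, θ s * picard θ x c₀ c₁ n s)
        - ∫ s in x..t, s * (θ s * picard θ x c₀ c₁ n s))

variable {θ : ℝ → ℝ} {x c₀ c₁ : ℝ}

lemma picard_cont (hθ : Continuous θ) : ∀ n, Continuous (picard θ x c₀ c₁ n) := by
  intro n
  induction n with
  | zero =>
      exact continuous_const.add (continuous_const.mul (continuous_id.sub continuous_const))
  | succ n ih =>
      exact ((continuous_id.mul (primitive_continuous (hθ.mul ih) x)).sub
        (primitive_continuous (continuous_id.mul (hθ.mul ih)) x)).neg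

lemma picard_succ_eq (hθ : Continuous θ) (n : ℕ) (t : ℝ) :
    picard θ x c₀ c₁ (n+1) t = -∫ s in x..t, (t - s) * θ s * picard θ x c₀ c₁ n s := by
  have hc := picard_cont (x := x) (c₀ := c₀) (c₁ := c₁) hθ n
  have h1 : Continuous fun s => t * (θ s * picard θ x c₀ c₁ n s) :=
    continuous_const.mul (hθ.mul hc)
  have h2 : Continuous fun s : ℝ => s * (θ s * picard θ x c₀ c₁ n s) :=
    continuous_id'.mul (hθ.mul hc)
  have key : (∫ s in x..t, (t - s) * θ s * picard θ x c₀ c₁ n s)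
      = (∫ s in x..t, (t * (θ s * picard θ x c₀ c₁ n s)
          - s * (θ s * picard θ x c₀ c₁ n s))) := by
    apply intervalIntegral.integral_congr
    intro s _
    simp only []
    ring
  rw [key, intervalIntegral.integral_sub (h1.intervalIntegrable _ _)
    (h2.intervalIntegrable _ _), intervalIntegral.integral_const_mul]
  rfl

lemma picard_bound (hθ : Continuous θ) {T M : ℝ} (hT : 0 ≤ T) (hM : 0 ≤ M)
    (hbd : ∀ s ∈ Set.Icc (x - T) (x + T), |θ s| ≤ M) :
    ∀ n, ∀ t ∈ Set.Icc (x - T) (x + T),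
      |picard θ x c₀ c₁ n t| ≤
        (|c₀| + |c₁| * T) * ((M * T) ^ n * |t - x| ^ n / n.factorial) := by
  intro n
  induction n with
  | zero =>
      intro t ht
      have h1 : |t - x| ≤ T := abs_le.mpr ⟨by linarith [ht.1], by linarith [ht.2]⟩
      simp only [picard, pow_zero, Nat.factorial_zero, Nat.cast_one]
      calc |c₀ + c₁ * (t - x)| ≤ |c₀| + |c₁| * |t - x| := by
              refine (abs_add_le _ _).trans ?_
              rw [abs_mul]
        _ ≤ (|c₀| + |c₁| * T) * (1 * 1 / 1) := by
              have := abs_nonneg c₁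
              nlinarith
  | succ n ih =>
      intro t ht
      have h1 : |t - x| ≤ T := abs_le.mpr ⟨by linarith [ht.1], by linarith [ht.2]⟩
      set C := |c₀| + |c₁| * T with hC
      have hC0 : 0 ≤ C := by positivity
      set K := C * ((M * T) ^ n / n.factorial) * (T * M) with hK
      have hK0 : 0 ≤ K := by positivity
      rw [picard_succ_eq hθ]
      rw [abs_neg]
      have hbound : ∀ s ∈ Set.uIoc x t,
          ‖(t - s) * θ s * picard θ x c₀ c₁ n s‖ ≤ K * |s - x| ^ n := by
        intro s hs
        have hsx : |s - x| ≤ |t - x| ∧ |t - s| ≤ |t - x| := by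
          rcases Set.mem_uIoc.mp hs with ⟨ha, hb⟩ | ⟨ha, hb⟩
          · rw [abs_of_nonneg (by linarith : (0:ℝ) ≤ s - x),
              abs_of_nonneg (by linarith : (0:ℝ) ≤ t - s),
              abs_of_nonneg (by linarith : (0:ℝ) ≤ t - x)]
            constructor <;> linarith
          · rw [abs_of_nonpos (by linarith : s - x ≤ (0:ℝ)),
              abs_of_nonpos (by linarith : t - s ≤ (0:ℝ)),
              abs_of_nonpos (by linarith : t - x ≤ (0:ℝ))]
            constructor <;> linarith
        obtain ⟨hsx, hts⟩ := hsx
        have hsI : s ∈ Set.Icc (x - T) (x + T) := by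
          constructor
          · have := abs_le.mp (hsx.trans h1); linarith [this.1]
          · have := abs_le.mp (hsx.trans h1); linarith [this.2]
        have h2 : |θ s| ≤ M := hbd s hsI
        have h3 := ih s hsI
        rw [Real.norm_eq_abs, abs_mul, abs_mul]
        calc |t - s| * |θ s| * |picard θ x c₀ c₁ n s|
            ≤ T * M * (C * ((M * T) ^ n * |s - x| ^ n / n.factorial)) := by
              apply mul_le_mul (mul_le_mul (hts.trans h1) h2 (abs_nonneg _) hT) h3
                (abs_nonneg _) (by positivity)
          _ = K * |s - x| ^ n := by rw [hK]; ring
      calc |∫ s in x..t, (t - s) * θ s * picard θ x c₀ c₁ n s|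
          ≤ |∫ s in x..t, K * |s - x| ^ n| := by
            rw [← Real.norm_eq_abs (∫ s in x..t, (t - s) * θ s * picard θ x c₀ c₁ n s)]
            apply intervalIntegral.norm_integral_le_abs_of_norm_le
            · exact (MeasureTheory.ae_restrict_iff' measurableSet_uIoc).mpr
                (Filter.Eventually.of_forall hbound)
            · exact (continuous_const.mul ((continuous_id.sub continuous_const).abs.pow n)).intervalIntegrable _ _
        _ = K * (|t - x| ^ (n + 1) / (n + 1)) := by
            rw [intervalIntegral.integral_const_mul, abs_mul, abs_of_nonneg hK0,
              abs_int_abs_pow]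
        _ ≤ (|c₀| + |c₁| * T) * ((M * T) ^ (n+1) * |t - x| ^ (n+1) / (n+1).factorial) := by
            apply le_of_eq
            rw [hK, ← hC, Nat.factorial_succ]
            have hfac : (0:ℝ) < n.factorial := by positivity
            push_cast
            field_simp
            ring

open TopologicalSpace in
lemma exists_solution (hθs : Continuous θ) (x c₀ c₁ : ℝ) :
    ∃ f : ℝ → ℝ, Continuous f ∧ (∀ t, HasDerivAt f (c₁ - ∫ s in x..t, θ s * f s) t) ∧
      f x = c₀ ∧
      f = fun t => c₀ + c₁ * (t - x) - ∫ s in x..t, (t - s) * θ s * f s := by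
  have hθ : Continuous θ := hθs
  set g := picard θ x c₀ c₁ with hg
  set f := fun t => ∑' n, g n t with hf
  have getB : ∀ t₀ : ℝ, ∃ T M : ℝ, 1 ≤ T ∧ 0 ≤ M ∧ |t₀ - x| < T ∧
      ∀ s ∈ Set.Icc (x - T) (x + T), |θ s| ≤ M := by
    intro t₀
    obtain ⟨M, hM⟩ := (isCompact_Icc (a := x - (|t₀ - x| + 1))
      (b := x + (|t₀ - x| + 1))).exists_bound_of_continuousOn hθ.continuousOn
    refine ⟨|t₀ - x| + 1, max M 0, by linarith [abs_nonneg (t₀ - x)], le_max_right _ _, by linarith,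
      fun s hs => ?_⟩
    have := hM s hs
    rw [Real.norm_eq_abs] at this
    exact this.trans (le_max_left _ _)
  have bnd : ∀ {T M : ℝ}, 1 ≤ T → 0 ≤ M →
      (∀ s ∈ Set.Icc (x - T) (x + T), |θ s| ≤ M) →
      ∀ n, ∀ t ∈ Set.Icc (x - T) (x + T),
        |g n t| ≤ (|c₀| + |c₁| * T) * ((M * T * T) ^ n / n.factorial) := by
    intro T M hT hM hbd n t ht
    have h1 : |t - x| ≤ T := abs_le.mpr ⟨by linarith [ht.1], by linarith [ht.2]⟩
    refine (picard_bound hθ (by linarith) hM hbd n t ht).trans ?_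
    have h2 : (M * T) ^ n * |t - x| ^ n ≤ (M * T * T) ^ n := by
      rw [← mul_pow]
      exact pow_le_pow_left₀ (by positivity)
        (mul_le_mul_of_nonneg_left h1 (by positivity)) n
    have hfac : (0:ℝ) < n.factorial := by positivity
    refine mul_le_mul_of_nonneg_left ?_ (by positivity)
    exact div_le_div_of_nonneg_right h2 hfac.le
  have hsummable : ∀ t, Summable fun n => g n t := by
    intro t
    obtain ⟨T, M, hT, hM, hlt, hbd⟩ := getB t
    have ht : t ∈ Set.Icc (x - T) (x + T) := by
      have := abs_lt.mp hlt; exact ⟨by linarith [this.1], by linarith [this.2]⟩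
    apply Summable.of_norm_bounded
      (((Real.summable_pow_div_factorial (M * T * T)).mul_left (|c₀| + |c₁| * T)))
    intro n
    rw [Real.norm_eq_abs]
    exact bnd hT hM hbd n t ht
  have hcont : Continuous f := by
    rw [continuous_iff_continuousAt]
    intro t₀
    obtain ⟨T, M, hT, hM, hlt, hbd⟩ := getB t₀
    have htu := tendstoUniformlyOn_tsum
      (((Real.summable_pow_div_factorial (M * T * T)).mul_left (|c₀| + |c₁| * T)))
      (f := fun n t => g n t) (s := Set.Icc (x - T) (x + T))
      (fun n t ht => by rw [Real.norm_eq_abs]; exact bnd hT hM hbd n t ht)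
    have hcOn : ContinuousOn f (Set.Icc (x - T) (x + T)) :=
      htu.continuousOn (Filter.Eventually.frequently (Filter.Eventually.of_forall fun N =>
        (continuous_finset_sum _ fun i _ => picard_cont hθ i).continuousOn))
    have := abs_lt.mp hlt
    exact hcOn.continuousAt (Icc_mem_nhds (by linarith [this.1]) (by linarith [this.2]))
  have heq : ∀ t, f t = c₀ + c₁ * (t - x) - ∫ s in x..t, (t - s) * θ s * f s := by
    intro t
    obtain ⟨T, M, hT, hM, hlt, hbd⟩ := getB t
    set C := |c₀| + |c₁| * T with hC
    have hsub : Set.uIcc x t ⊆ Set.Icc (x - T) (x + T) := by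
      apply Set.uIcc_subset_Icc
      · constructor <;> linarith
      · have := abs_lt.mp hlt
        constructor <;> linarith [this.1, this.2]
    set F : ℕ → C(ℝ, ℝ) := fun n => ⟨fun s => (t - s) * θ s * g n s,
      (((continuous_const.sub continuous_id').mul hθ).mul (picard_cont hθ n))⟩ with hF
    have hnorm : ∀ n, ‖(F n).restrict (⟨Set.uIcc x t, isCompact_uIcc⟩ : Compacts ℝ)‖
        ≤ T * M * (C * ((M * T * T) ^ n / n.factorial)) := by
      intro n
      apply (ContinuousMap.norm_le _ (by positivity)).mpr
      rintro ⟨s, hs⟩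
      have hsI : s ∈ Set.Icc (x - T) (x + T) := hsub hs
      have hts : |t - s| ≤ T := by
        rcases Set.mem_uIcc.mp hs with ⟨ha, hb⟩ | ⟨ha, hb⟩ <;>
          [rw [abs_of_nonneg (by linarith : (0:ℝ) ≤ t - s)];
           rw [abs_of_nonpos (by linarith : t - s ≤ (0:ℝ))]] <;>
          · have h1 := abs_lt.mp hlt
            have h2 := hsI.1
            have h3 := hsI.2
            linarith [h1.1, h1.2]
      show ‖(t - s) * θ s * g n s‖ ≤ _
      rw [Real.norm_eq_abs, abs_mul, abs_mul]
      have h4 := hbd s hsI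
      have h5 := bnd hT hM hbd n s hsI
      apply mul_le_mul (mul_le_mul hts h4 (abs_nonneg _) (by linarith)) h5 (abs_nonneg _)
        (by positivity)
    have hsummable_norm : Summable fun n =>
        ‖(F n).restrict (⟨Set.uIcc x t, isCompact_uIcc⟩ : Compacts ℝ)‖ :=
      Summable.of_nonneg_of_le (fun n => norm_nonneg _) hnorm
        ((((Real.summable_pow_div_factorial (M * T * T)).mul_left C).mul_left (T * M)).congr
          (fun n => by ring))
    have hs2 := hasSum_intervalIntegral_of_summable_norm (a := x) (b := t) hsummable_norm
    have hintg : ∀ s : ℝ, (∑' n, F n s) = (t - s) * θ s * f s := by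
      intro s
      show (∑' n, (t - s) * θ s * g n s) = (t - s) * θ s * f s
      simp_rw [mul_assoc]
      rw [tsum_mul_left, tsum_mul_left]
    rw [show (∫ s in x..t, ∑' i, (F i) s) = ∫ s in x..t, (t - s) * θ s * f s from
      intervalIntegral.integral_congr fun s _ => hintg s] at hs2
    have e1 : f t = g 0 t + ∑' n, g (n + 1) t := (hsummable t).tsum_eq_zero_add
    have e2 : (∑' n, g (n + 1) t) = -∑' n, ∫ s in x..t, (F n) s := by
      rw [← tsum_neg]
      congr 1
      funext n
      show picard θ x c₀ c₁ (n + 1) t = -∫ s in x..t, (F n) s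
      rw [picard_succ_eq hθ]
      rfl
    rw [e1, e2, hs2.tsum_eq]
    show c₀ + c₁ * (t - x) + -(∫ s in x..t, (t - s) * θ s * f s) = _
    ring
  -- derivative structure
  have hA : ∀ t, HasDerivAt (fun u => ∫ s in x..u, θ s * f s) (θ t * f t) t :=
    primitive_hasDerivAt (hθ.mul hcont) x
  have hB : ∀ t, HasDerivAt (fun u => ∫ s in x..u, s * (θ s * f s)) (t * (θ t * f t)) t :=
    primitive_hasDerivAt (continuous_id'.mul (hθ.mul hcont)) x
  have hsplit : ∀ t, f t = c₀ + c₁ * (t - x)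
      - (t * (∫ s in x..t, θ s * f s) - ∫ s in x..t, s * (θ s * f s)) := by
    intro t
    rw [heq t]
    congr 1
    have key : (∫ s in x..t, (t - s) * θ s * f s)
        = (∫ s in x..t, (t * (θ s * f s) - s * (θ s * f s))) := by
      apply intervalIntegral.integral_congr
      intro s _
      simp only []
      ring
    rw [key, intervalIntegral.integral_sub (f := fun s => t * (θ s * f s)) (g := fun s => s * (θ s * f s))
      ((continuous_const.mul (hθ.mul hcont)).intervalIntegrable _ _)
      ((continuous_id'.mul (hθ.mul hcont)).intervalIntegrable _ _),
      intervalIntegral.integral_const_mul]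
  have hfd : ∀ t, HasDerivAt f (c₁ - ∫ s in x..t, θ s * f s) t := by
    intro t
    have expr : HasDerivAt (fun u => c₀ + c₁ * (u - x)
        - (u * (∫ s in x..u, θ s * f s) - ∫ s in x..u, s * (θ s * f s)))
        (c₁ - ∫ s in x..t, θ s * f s) t := by
      have h1 : HasDerivAt (fun u : ℝ => c₀ + c₁ * (u - x)) c₁ t := by
        simpa using (((hasDerivAt_id t).sub_const x).const_mul c₁).const_add c₀
      have h2 : HasDerivAt (fun u : ℝ => u * (∫ s in x..u, θ s * f s))
          (1 * (∫ s in x..t, θ s * f s) + t * (θ t * f t)) t :=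
        (hasDerivAt_id t).mul (hA t)
      have h3 := (h2.sub (hB t))
      have h4 := h1.sub h3
      convert! h4 using 1
      ring
    exact expr.congr_of_eventuallyEq (Filter.Eventually.of_forall hsplit)
  refine ⟨f, hcont, hfd, ?_, funext heq⟩
  simpa using hsplit x

lemma exists_solution_ode (hθs : ContDiff ℝ (⊤:ℕ∞) θ) (x c₀ c₁ : ℝ) :
    ∃ f : ℝ → ℝ, ContDiff ℝ (⊤:ℕ∞) f ∧ (∀ t, deriv (deriv f) t + θ t * f t = 0) ∧
      f x = c₀ ∧ deriv f x = c₁ := by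
  have hθ : Continuous θ := hθs.continuous
  obtain ⟨f, hcont, hfd, hfx, -⟩ := exists_solution hθ x c₀ c₁
  have hderiv1 : deriv f = fun t => c₁ - ∫ s in x..t, θ s * f s :=
    funext fun t => (hfd t).deriv
  have hfd2 : ∀ t, HasDerivAt (deriv f) (-(θ t * f t)) t := by
    intro t
    rw [hderiv1]
    have := (hasDerivAt_const t c₁).sub (primitive_hasDerivAt (hθ.mul hcont) x t)
    exact (primitive_hasDerivAt (hθ.mul hcont) x t).const_sub c₁
  have hdd : deriv (deriv f) = fun t => -(θ t * f t) := funext fun t => (hfd2 t).deriv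
  have hsm : ∀ n : ℕ, ContDiff ℝ n f ∧ ContDiff ℝ n (deriv f) := by
    intro n
    induction n with
    | zero =>
        refine ⟨contDiff_zero.mpr hcont, contDiff_zero.mpr ?_⟩
        rw [hderiv1]
        exact continuous_const.sub (primitive_continuous (hθ.mul hcont) x)
    | succ n ih =>
        constructor
        · rw [show ((n + 1 : ℕ) : WithTop ℕ∞) = (n : WithTop ℕ∞) + 1 by push_cast; ring]
          exact contDiff_succ_iff_deriv.mpr
            ⟨fun t => (hfd t).differentiableAt, by simp, ih.2⟩
        · rw [show ((n + 1 : ℕ) : WithTop ℕ∞) = (n : WithTop ℕ∞) + 1 by push_cast; ring]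
          refine contDiff_succ_iff_deriv.mpr
            ⟨fun t => (hfd2 t).differentiableAt, by simp, ?_⟩
          rw [hdd]
          exact ((hθs.of_le (by exact_mod_cast le_top)).mul ih.1).neg
  refine ⟨f, ?_, ?_, hfx, ?_⟩
  · exact contDiff_infty.mpr fun n => (hsm n).1
  · intro t
    have : deriv (deriv f) t = -(θ t * f t) := (hfd2 t).deriv
    rw [this]
    ring
  · have := (hfd x).deriv
    simpa using this

lemma one_le_inf : (1 : WithTop ℕ∞) ≤ ((⊤:ℕ∞) : WithTop ℕ∞) := by exact_mod_cast le_top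

lemma iteratedDeriv_four (hθs : ContDiff ℝ (⊤:ℕ∞) θ) {x : ℝ} {u v : ℝ → ℝ}
    (hu : ContDiff ℝ (⊤:ℕ∞) u) (hv : ContDiff ℝ (⊤:ℕ∞) v)
    (huo : ∀ t, deriv (deriv u) t + θ t * u t = 0)
    (hvo : ∀ t, deriv (deriv v) t + θ t * v t = 0)
    (hu1 : u x = 1) (hu0 : deriv u x = 0) (hv0 : v x = 0) (hv1 : deriv v x = 1) :
    iteratedDeriv 4 (fun t => v t / u t) x = 2 * deriv θ x := by
  have hud : Differentiable ℝ u := hu.differentiable (by simp)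
  have hvd : Differentiable ℝ v := hv.differentiable (by simp)
  have hu'd : Differentiable ℝ (deriv u) :=
    ((contDiff_infty_iff_deriv.mp hu).2).differentiable (by simp)
  have hv'd : Differentiable ℝ (deriv v) :=
    ((contDiff_infty_iff_deriv.mp hv).2).differentiable (by simp)
  have hu'deriv : ∀ t, HasDerivAt (deriv u) (-(θ t * u t)) t := by
    intro t
    have h := (hu'd t).hasDerivAt
    rwa [show deriv (deriv u) t = -(θ t * u t) from by linarith [huo t]] at h
  have hv'deriv : ∀ t, HasDerivAt (deriv v) (-(θ t * v t)) t := by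
    intro t
    have h := (hv'd t).hasDerivAt
    rwa [show deriv (deriv v) t = -(θ t * v t) from by linarith [hvo t]] at h
  have hW : ∀ t, deriv v t * u t - v t * deriv u t = 1 := by
    have hdiff : Differentiable ℝ (fun t => u t * deriv v t - deriv u t * v t) :=
      (hud.mul hv'd).sub (hu'd.mul hvd)
    have hzero : ∀ t, deriv (fun t => u t * deriv v t - deriv u t * v t) t = 0 := by
      intro t
      have h1 : HasDerivAt (fun t => u t * deriv v t - deriv u t * v t)
          ((deriv u t * deriv v t + u t * (-(θ t * v t)))
            - ((-(θ t * u t)) * v t + deriv u t * deriv v t)) t :=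
        ((hud t).hasDerivAt.mul (hv'deriv t)).sub ((hu'deriv t).mul (hvd t).hasDerivAt)
      rw [h1.deriv]
      ring
    intro t
    have hconst := is_const_of_deriv_eq_zero hdiff hzero t x
    simp only [hu1, hu0, hv0, hv1] at hconst
    linarith [hconst]
  set U : Set ℝ := u ⁻¹' {0}ᶜ with hU
  have hUo : IsOpen U := isOpen_compl_singleton.preimage hu.continuous
  have hxU : x ∈ U := by
    show u x ≠ 0
    rw [hu1]; exact one_ne_zero
  set φ₁ : ℝ → ℝ := fun t => 1 / u t ^ 2 with hφ₁
  set φ₂ : ℝ → ℝ := fun t => -(2 * deriv u t) / u t ^ 3 with hφ₂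
  set φ₃ : ℝ → ℝ := fun t => 2 * (θ t * u t) / u t ^ 3 + 6 * deriv u t ^ 2 / u t ^ 4 with hφ₃
  have e1 : Set.EqOn (deriv fun s => v s / u s) φ₁ U := by
    intro t ht
    have hut : u t ≠ 0 := ht
    have h := ((hvd t).hasDerivAt.fun_div (hud t).hasDerivAt hut).deriv
    rw [h, hφ₁, show deriv v t * u t - v t * deriv u t = 1 from hW t]
  have e2 : ∀ t ∈ U, HasDerivAt φ₁ (φ₂ t) t := by
    intro t ht
    have hut : u t ≠ 0 := ht
    have h := (hasDerivAt_const t (1:ℝ)).div ((hud t).hasDerivAt.pow 2)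
      (pow_ne_zero 2 hut)
    convert! h using 1
    simp only [hφ₂, Pi.pow_apply]
    rw [div_eq_div_iff (pow_ne_zero 3 hut) (pow_ne_zero 2 (pow_ne_zero 2 hut))]
    push_cast
    ring
  have e3 : ∀ t ∈ U, HasDerivAt φ₂ (φ₃ t) t := by
    intro t ht
    have hut : u t ≠ 0 := ht
    have h := (((hu'deriv t).const_mul (2:ℝ)).neg).div ((hud t).hasDerivAt.pow 3)
      (pow_ne_zero 3 hut)
    convert! h using 1
    simp only [hφ₃, Pi.pow_apply, Pi.neg_apply]
    rw [div_add_div _ _ (pow_ne_zero 3 hut) (pow_ne_zero 4 hut),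
      div_eq_div_iff (mul_ne_zero (pow_ne_zero 3 hut) (pow_ne_zero 4 hut))
        (pow_ne_zero 2 (pow_ne_zero 3 hut))]
    push_cast
    ring
  have e4 : HasDerivAt φ₃ (2 * deriv θ x) x := by
    have hθdx : HasDerivAt θ (deriv θ x) x := (hθs.differentiable (by simp) x).hasDerivAt
    have hux : u x ≠ 0 := by rw [hu1]; exact one_ne_zero
    have h1 := ((hθdx.mul (hud x).hasDerivAt).const_mul (2:ℝ)).div
      ((hud x).hasDerivAt.pow 3) (pow_ne_zero 3 hux)
    have h2 := (((hu'deriv x).pow 2).const_mul (6:ℝ)).div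
      ((hud x).hasDerivAt.pow 4) (pow_ne_zero 4 hux)
    have h := h1.add h2
    convert! h using 1
    simp only [Pi.pow_apply, Pi.mul_apply]
    rw [hu1, hu0]
    norm_num
  have E2 : ∀ t ∈ U, iteratedDeriv 2 (fun s => v s / u s) t = φ₂ t := by
    intro t ht
    rw [show (2:ℕ) = 1 + 1 from rfl, iteratedDeriv_succ, iteratedDeriv_one]
    have heps : deriv (fun s => v s / u s) =ᶠ[nhds t] φ₁ :=
      Filter.eventuallyEq_of_mem (hUo.mem_nhds ht) e1
    rw [heps.deriv_eq, (e2 t ht).deriv]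
  have E3 : ∀ t ∈ U, iteratedDeriv 3 (fun s => v s / u s) t = φ₃ t := by
    intro t ht
    rw [show (3:ℕ) = 2 + 1 from rfl, iteratedDeriv_succ]
    have heps : iteratedDeriv 2 (fun s => v s / u s) =ᶠ[nhds t] φ₂ :=
      Filter.eventuallyEq_of_mem (hUo.mem_nhds ht) E2
    rw [heps.deriv_eq, (e3 t ht).deriv]
  rw [show (4:ℕ) = 3 + 1 from rfl, iteratedDeriv_succ]
  have heps : iteratedDeriv 3 (fun s => v s / u s) =ᶠ[nhds x] φ₃ :=
    Filter.eventuallyEq_of_mem (hUo.mem_nhds hxU) E3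
  rw [heps.deriv_eq, e4.deriv]


lemma sym_reflect {θ : ℝ → ℝ} {K : ℝ} (hK : ∀ t, θ t = K) {g : ℝ → ℝ}
    (hg : ContDiff ℝ (⊤:ℕ∞) g)
    (hode : ∀ t, deriv (deriv g) t + θ t * g t = 0) (x : ℝ) {ε : ℝ}
    (hε : ε = 1 ∨ ε = -1)
    (h1 : g x = ε * g x) (h2 : deriv g x = -(ε * deriv g x)) :
    ∀ t, g (2 * x - t) = ε * g t := by
  have hgd : Differentiable ℝ g := hg.differentiable (by simp)
  have hg'd : Differentiable ℝ (deriv g) :=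
    ((contDiff_infty_iff_deriv.mp hg).2).differentiable (by simp)
  have hg'deriv : ∀ t, HasDerivAt (deriv g) (-(K * g t)) t := by
    intro t
    have h := (hg'd t).hasDerivAt
    rwa [show deriv (deriv g) t = -(K * g t) from by
      have := hode t; rw [hK t] at this; linarith] at h
  set F : ℝ → ℝ × ℝ := fun t => (g t, deriv g t) with hF
  set G : ℝ → ℝ × ℝ := fun t => (ε * g (2*x - t), -(ε * deriv g (2*x - t))) with hG
  set vf : ℝ → ℝ × ℝ → ℝ × ℝ := fun _ p => (p.2, -K * p.1) with hvf
  have lip : ∀ t, LipschitzWith (Real.toNNReal (max 1 |K|)) (vf t) := by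
    intro t
    apply LipschitzWith.of_dist_le_mul
    intro p q
    rw [Prod.dist_eq, Prod.dist_eq, Real.coe_toNNReal _ (by positivity)]
    simp only [hvf]
    rw [Real.dist_eq, Real.dist_eq, Real.dist_eq]
    have h3 : (-K * p.1) - (-K * q.1) = -(K * (p.1 - q.1)) := by ring
    rw [h3, abs_neg, abs_mul]
    set a := |p.1 - q.1| with ha
    set b := |p.2 - q.2| with hb
    have ha0 : 0 ≤ a := abs_nonneg _
    have hb0 : 0 ≤ b := abs_nonneg _
    apply max_le
    · calc b ≤ max a b := le_max_right _ _
        _ = 1 * max a b := (one_mul _).symm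
        _ ≤ max 1 |K| * max a b :=
            mul_le_mul_of_nonneg_right (le_max_left _ _) (le_trans hb0 (le_max_right a b))
    · exact mul_le_mul (le_max_right _ _) (le_max_left a b) ha0
        (le_trans zero_le_one (le_max_left 1 |K|))
  have keyF : ∀ t, HasDerivAt F (vf t (F t)) t := by
    intro t
    have h := (hgd t).hasDerivAt.prodMk (hg'deriv t)
    simpa [hvf, hF, neg_mul] using h
  have keyG : ∀ t, HasDerivAt G (vf t (G t)) t := by
    intro t
    have hinner : HasDerivAt (fun s : ℝ => 2*x - s) (-1) t := by
      simpa using (hasDerivAt_id t).const_sub (2*x)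
    have c1 : HasDerivAt (fun s => g (2*x - s)) (deriv g (2*x - t) * (-1)) t :=
      (hgd (2*x - t)).hasDerivAt.comp t hinner
    have c2 : HasDerivAt (fun s => deriv g (2*x - s)) ((-(K * g (2*x - t))) * (-1)) t :=
      (hg'deriv (2*x - t)).comp t hinner
    have p12 := (c1.const_mul ε).prodMk ((c2.const_mul ε).neg)
    convert! p12 using 1
    rw [Prod.ext_iff]
    constructor
    · show (G t).2 = ε * (deriv g (2*x - t) * (-1))
      simp only [hG]
      ring
    · show -K * (G t).1 = -(ε * (-(K * g (2*x - t)) * (-1)))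
      simp only [hG]
      ring
  have hFc : Continuous F := hgd.continuous.prodMk hg'd.continuous
  have hGc : Continuous G := by
    have hc : Continuous fun s : ℝ => 2*x - s := continuous_const.sub continuous_id
    exact (continuous_const.mul (hgd.continuous.comp hc)).prodMk
      (continuous_const.mul (hg'd.continuous.comp hc)).neg
  have hFGx : F x = G x := by
    rw [Prod.ext_iff]
    constructor
    · show g x = ε * g (2*x - x)
      rw [show 2*x - x = x from by ring]
      exact h1
    · show deriv g x = -(ε * deriv g (2*x - x))
      rw [show 2*x - x = x from by ring]
      exact h2
  have core : ∀ t, x ≤ t → F t = G t := by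
    intro t hxt
    exact ODE_solution_unique lip hFc.continuousOn
      (fun s _ => (keyF s).hasDerivWithinAt) hGc.continuousOn
      (fun s _ => (keyG s).hasDerivWithinAt) hFGx (Set.right_mem_Icc.mpr hxt)
  have hε2 : ε * ε = 1 := by rcases hε with h | h <;> rw [h] <;> norm_num
  intro t
  rcases le_total x t with h | h
  · have hFG := core t h
    have h1' : g t = ε * g (2*x - t) := congrArg Prod.fst hFG
    rw [h1', ← mul_assoc, hε2, one_mul]
  · have hFG := core (2*x - t) (by linarith)
    have h1' : g (2*x - t) = ε * g (2*x - (2*x - t)) := congrArg Prod.fst hFG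
    rwa [show 2*x - (2*x - t) = t from by ring] at h1'

lemma even_iteratedDeriv_zero {h : ℝ → ℝ} {x : ℝ} (hodd : ∀ t, h (2*x - t) = -h t) (n : ℕ) :
    iteratedDeriv (2*n) h x = 0 := by
  have claim : ∀ m : ℕ, ∀ t,
      iteratedDeriv m h (2*x - t) = (-1:ℝ)^(m+1) * iteratedDeriv m h t := by
    intro m
    induction m with
    | zero =>
        intro t
        simpa [iteratedDeriv_zero] using hodd t
    | succ m ih =>
        intro t
        rw [iteratedDeriv_succ]
        have hfun : (fun s => iteratedDeriv m h (2*x - s))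
            = fun s => (-1:ℝ)^(m+1) * iteratedDeriv m h s := funext ih
        have hd := deriv_comp_const_sub (iteratedDeriv m h) (2*x) t
        rw [hfun, deriv_const_mul_field] at hd
        have : deriv (iteratedDeriv m h) (2*x - t)
            = -((-1:ℝ)^(m+1) * deriv (iteratedDeriv m h) t) := by linarith [hd]
        rw [this]
        ring
  have key := claim (2*n) x
  rw [show 2*x - x = x from by ring] at key
  have hpow : ((-1:ℝ))^(2*n+1) = -1 := Odd.neg_one_pow ⟨n, by ring⟩
  rw [hpow] at key
  linarith [key]

end Aux16

noncomputable section

open MeasureTheory Filter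

/-- For smooth θ, `𝒮_{2n}^θ(x) = 0` for every `n ≥ 1` and every `x` if
and only if θ is constant. -/
theorem stmt16 (θ : ℝ → ℝ) (hθ : ContDiff ℝ (⊤ : ℕ∞) θ) :
    (∀ n : ℕ, 1 ≤ n → ∀ (x : ℝ) (f₁ f₂ : ℝ → ℝ), IsFundPair θ x f₁ f₂ →
        iteratedDeriv (2 * n) (fun t => f₂ t / f₁ t) x = 0) ↔
      ∃ K : ℝ, ∀ x : ℝ, θ x = K := by
  constructor
  · intro hyp
    have hzero : ∀ y : ℝ, deriv θ y = 0 := by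
      intro y
      obtain ⟨f₁, hf₁s, hf₁e, h11, h10⟩ := exists_solution_ode hθ y 1 0
      obtain ⟨f₂, hf₂s, hf₂e, h20, h21⟩ := exists_solution_ode hθ y 0 1
      have hpair : IsFundPair θ y f₁ f₂ := ⟨⟨hf₁s, hf₁e⟩, ⟨hf₂s, hf₂e⟩, h11, h10, h20, h21⟩
      have h4 : iteratedDeriv 4 (fun t => f₂ t / f₁ t) y = 0 :=
        hyp 2 (by norm_num) y f₁ f₂ hpair
      rw [iteratedDeriv_four hθ hf₁s hf₂s hf₁e hf₂e h11 h10 h20 h21] at h4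
      linarith
    exact ⟨θ 0, fun y => is_const_of_deriv_eq_zero (hθ.differentiable (by simp)) hzero y 0⟩
  · rintro ⟨K, hK⟩ n hn x f₁ f₂ ⟨⟨hs1c, hs1e⟩, ⟨hs2c, hs2e⟩, h11, h10, h20, h21⟩
    have hf₁ : ∀ t, f₁ (2 * x - t) = 1 * f₁ t :=
      sym_reflect hK hs1c hs1e x (Or.inl rfl) (by ring) (by rw [h10]; ring)
    have hf₂ : ∀ t, f₂ (2 * x - t) = -1 * f₂ t :=
      sym_reflect hK hs2c hs2e x (Or.inr rfl) (by rw [h20]; ring) (by ring)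
    have hodd : ∀ t, (fun t => f₂ t / f₁ t) (2 * x - t) = -((fun t => f₂ t / f₁ t) t) := by
      intro t
      simp only []
      rw [hf₁ t, hf₂ t, one_mul, neg_one_mul, neg_div]
    exact even_iteratedDeriv_zero hodd n

end
end
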